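/- arXiv:2509.22529 — 7 statements merged into one kernel-verified Lean document; each statement's English description precedes it below -/
import Mathlib

section
/- Let m ≥ 1 and let (V₁,…,V_{m+1}) be real-valued random variables whose joint distribution is invariant under every permutation of the m+1 coordinates. For 1 ≤ k ≤ m let V_{(k)} denote the k-th smallest value among V₁,…,V_m. Then P(V_{m+1} < V_{(k)}) ≤ k/(m+1), and consequently P(V_{m+1} ≥ V_{(k)}) ≥ 1 − k/(m+1). -/
open MeasureTheory Finset
open scoped ENNReal

/-- The `k`-th smallest value (1-indexed) among `v 0, …, v (n-1)`. -/
noncomputable def kthSmallest {n : ℕ} (v : Fin n → ℝ) (k : ℕ) : ℝ :=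
  ((Multiset.map v Finset.univ.val).sort (· ≤ ·)).getD (k - 1) 0


theorem sorted_get_le_iff (l : List ℝ) (hl : l.Pairwise (· ≤ ·)) (i : ℕ) (hi : i < l.length)
    (x : ℝ) : l.get ⟨i, hi⟩ ≤ x ↔ i < l.countP (· ≤ x) := by
  constructor
  · intro h
    have hsplit : l = l.take (i+1) ++ l.drop (i+1) := (List.take_append_drop _ _).symm
    have h1 : (l.take (i+1)).countP (fun y => decide (y ≤ x)) = i + 1 := by
      rw [List.countP_eq_length.2, List.length_take, min_eq_left (by omega)]
      intro y hy
      rw [List.mem_iff_getElem] at hy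
      obtain ⟨j, hj, rfl⟩ := hy
      have hj' : j < l.length := by simp [List.length_take] at hj; omega
      rw [List.getElem_take]
      have : l.get ⟨j, hj'⟩ ≤ l.get ⟨i, hi⟩ := by
        rcases eq_or_lt_of_le (show j ≤ i by simp [List.length_take] at hj; omega) with h' | h'
        · simp [h']
        · exact List.Pairwise.rel_get_of_lt hl h'
      simpa using le_trans this h
    calc i < i + 1 := by omega
    _ ≤ _ := by
      conv_rhs => rw [hsplit]
      rw [List.countP_append, h1]; omega
  · intro h
    by_contra hx
    push_neg at hx
    have hsplit : l = l.take i ++ l.drop i := (List.take_append_drop _ _).symm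
    have h2 : (l.drop i).countP (fun y => decide (y ≤ x)) = 0 := by
      rw [List.countP_eq_zero]
      intro y hy
      rw [List.mem_iff_getElem] at hy
      obtain ⟨j, hj, rfl⟩ := hy
      rw [List.getElem_drop]
      have hij : i + j < l.length := by simp at hj; omega
      have : l.get ⟨i, hi⟩ ≤ l.get ⟨i + j, hij⟩ := by
        rcases Nat.eq_zero_or_pos j with h' | h'
        · simp [h']
        · exact List.Pairwise.rel_get_of_lt hl (by simp; omega)
      simp only [decide_eq_true_eq]
      push_neg
      exact lt_of_lt_of_le hx this
    have : l.countP (fun y => decide (y ≤ x)) ≤ i := by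
      conv_lhs => rw [hsplit]
      rw [List.countP_append, h2]
      simpa using (List.countP_le_length).trans (by simp)
    omega

theorem lt_kthSmallest_iff {n : ℕ} (v : Fin n → ℝ) (k : ℕ) (hk1 : 1 ≤ k) (hk : k ≤ n)
    (x : ℝ) : x < kthSmallest v k ↔
      (Finset.univ.filter (fun i => v i ≤ x)).card < k := by
  set l := (Multiset.map v Finset.univ.val).sort (· ≤ ·) with hldef
  have hlen : l.length = n := by
    simp [hldef]
  have hsorted : l.Pairwise (· ≤ ·) := Multiset.pairwise_sort _ _
  have hik : k - 1 < l.length := by omega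
  have hget : kthSmallest v k = l.get ⟨k - 1, hik⟩ := by
    rw [kthSmallest, List.getD_eq_getElem _ _ hik]; rfl
  have hcount : l.countP (· ≤ x) = (Finset.univ.filter (fun i => v i ≤ x)).card := by
    have : (l : Multiset ℝ) = Multiset.map v Finset.univ.val := Multiset.sort_eq _ _
    calc l.countP (· ≤ x) = Multiset.countP (fun y => y ≤ x) (l : Multiset ℝ) := rfl
    _ = Multiset.countP (fun y => y ≤ x) (Multiset.map v Finset.univ.val) := by rw [this]
    _ = Multiset.countP (fun i => v i ≤ x) Finset.univ.val := by
        rw [Multiset.countP_map]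
        simp [Multiset.countP_eq_card_filter]
    _ = _ := by rw [Finset.card_filter]; simp [Multiset.countP_eq_card_filter, Finset.filter]
  rw [hget]
  rw [← not_le, sorted_get_le_iff l hsorted _ hik x, not_lt, hcount]
  omega

theorem card_low_rank_le {N : ℕ} (w : Fin N → ℝ) (k : ℕ) :
    (univ.filter fun j => (univ.filter fun i => w i ≤ w j).card ≤ k).card ≤ k := by
  set S := univ.filter fun j => (univ.filter fun i => w i ≤ w j).card ≤ k with hS
  rcases S.eq_empty_or_nonempty with h | h
  · simp [h]
  · obtain ⟨j, hjS, hjmax⟩ := S.exists_max_image w h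
    have hsub : S ⊆ univ.filter fun i => w i ≤ w j := fun i hi =>
      mem_filter.2 ⟨mem_univ i, hjmax i hi⟩
    exact le_trans (card_le_card hsub) ((mem_filter.1 hjS).2)

theorem swap_count (m : ℕ) (w : Fin (m+1) → ℝ) (j : Fin (m+1)) (k : ℕ) :
    ((univ.filter fun i : Fin m => w (Equiv.swap j (Fin.last m) i.castSucc) ≤ w j).card < k)
    ↔ ((univ.filter fun i : Fin (m+1) => w i ≤ w j).card ≤ k) := by
  set e : Fin m → Fin (m+1) := fun i => Equiv.swap j (Fin.last m) i.castSucc with he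
  have hinj : Function.Injective e := fun a b hab => by
    simpa [he] using Fin.castSucc_injective m ((Equiv.swap j (Fin.last m)).injective hab)
  have himg : (univ : Finset (Fin m)).image e = univ.erase j := by
    apply Finset.eq_of_subset_of_card_le
    · intro x hx
      simp only [mem_image, mem_univ, true_and] at hx
      obtain ⟨i, rfl⟩ := hx
      refine mem_erase.2 ⟨?_, mem_univ _⟩
      intro hxj
      have heq : Equiv.swap j (Fin.last m) i.castSucc = Equiv.swap j (Fin.last m) (Fin.last m) := by
        rw [Equiv.swap_apply_right]; exact hxj
      exact absurd ((Equiv.swap j (Fin.last m)).injective heq) (Fin.castSucc_lt_last i).ne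
    · rw [card_erase_of_mem (mem_univ j), card_image_of_injective _ hinj]
      simp
  have hcard1 : (univ.filter fun i : Fin m => w (e i) ≤ w j).card
      = ((univ.erase j).filter fun i => w i ≤ w j).card := by
    rw [← himg, Finset.filter_image, card_image_of_injective _ hinj]
  have hcard2 : ((univ.erase j).filter fun i => w i ≤ w j).card + 1
      = (univ.filter fun i : Fin (m+1) => w i ≤ w j).card := by
    rw [Finset.filter_erase, card_erase_add_one]
    exact mem_filter.2 ⟨mem_univ j, le_refl _⟩
  rw [hcard1]
  omega

/-- **Exchangeable rank bound.** If `(V₁, …, V_{m+1})` is exchangeable and `V_{(k)}` denotes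
the `k`-th smallest among the first `m` of them (`1 ≤ k ≤ m`), then
`P(V_{m+1} < V_{(k)}) ≤ k/(m+1)` and `P(V_{m+1} ≥ V_{(k)}) ≥ 1 - k/(m+1)`. -/
theorem exchangeable_rank_bound
    {Ω : Type*} [MeasurableSpace Ω] (P : Measure Ω) [IsProbabilityMeasure P]
    (m : ℕ) (hm : 1 ≤ m)
    (V : Fin (m + 1) → Ω → ℝ) (hV : ∀ i, Measurable (V i))
    (hexch : ∀ π : Equiv.Perm (Fin (m + 1)),
      Measure.map (fun ω => fun i => V (π i) ω) P
        = Measure.map (fun ω => fun i => V i ω) P)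
    (k : ℕ) (hk1 : 1 ≤ k) (hkm : k ≤ m) :
    P {ω | V (Fin.last m) ω < kthSmallest (fun i : Fin m => V i.castSucc ω) k}
        ≤ ENNReal.ofReal ((k : ℝ) / (m + 1))
      ∧ P {ω | kthSmallest (fun i : Fin m => V i.castSucc ω) k ≤ V (Fin.last m) ω}
        ≥ ENNReal.ofReal (1 - (k : ℝ) / (m + 1)) := by
  classical
  -- the "bad" set in distribution space
  set B : Set (Fin (m+1) → ℝ) :=
    {w | (univ.filter fun i : Fin m => w i.castSucc ≤ w (Fin.last m)).card < k} with hB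
  -- measurability of B
  have hfmeas : Measurable
      (fun w : Fin (m+1) → ℝ =>
        (univ.filter fun i : Fin m => w i.castSucc ≤ w (Fin.last m)).card) := by
    have : (fun w : Fin (m+1) → ℝ =>
        (univ.filter fun i : Fin m => w i.castSucc ≤ w (Fin.last m)).card)
        = fun w => ∑ i : Fin m, if w i.castSucc ≤ w (Fin.last m) then 1 else 0 := by
      funext w; rw [Finset.card_filter]
    rw [this]
    exact Finset.measurable_sum _ fun i _ =>
      Measurable.ite (measurableSet_le (measurable_pi_apply _) (measurable_pi_apply _))
        measurable_const measurable_const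
  have hBmeas : MeasurableSet B := hfmeas (MeasurableSet.of_discrete (s := Set.Iio k))
  -- the joint map and the permuted joint maps
  set J : Ω → (Fin (m+1) → ℝ) := fun ω i => V i ω with hJ
  have hJmeas : Measurable J := measurable_pi_lambda _ fun i => hV i
  set T : Fin (m+1) → Ω → (Fin (m+1) → ℝ) :=
    fun j ω i => V (Equiv.swap j (Fin.last m) i) ω with hT
  have hTmeas : ∀ j, Measurable (T j) := fun j => measurable_pi_lambda _ fun i => hV _
  -- the target event equals J ⁻¹' B
  have hAeq : {ω | V (Fin.last m) ω < kthSmallest (fun i : Fin m => V i.castSucc ω) k}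
      = J ⁻¹' B := by
    ext ω
    simp only [Set.mem_setOf_eq, Set.mem_preimage, hB, hJ]
    exact lt_kthSmallest_iff _ k hk1 hkm _
  -- all permuted events have the same probability
  have hsame : ∀ j : Fin (m+1), P (T j ⁻¹' B) = P (J ⁻¹' B) := by
    intro j
    have h1 : P (T j ⁻¹' B) = Measure.map (T j) P B :=
      (Measure.map_apply (hTmeas j) hBmeas).symm
    have h2 : P (J ⁻¹' B) = Measure.map J P B :=
      (Measure.map_apply hJmeas hBmeas).symm
    rw [h1, h2, hexch (Equiv.swap j (Fin.last m))]
  -- pointwise count bound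
  have hcount : ∀ ω, (univ.filter fun j : Fin (m+1) => ω ∈ T j ⁻¹' B).card ≤ k := by
    intro ω
    set w : Fin (m+1) → ℝ := fun i => V i ω with hw
    have hmem : ∀ j, (ω ∈ T j ⁻¹' B) ↔
        (univ.filter fun i : Fin (m+1) => w i ≤ w j).card ≤ k := by
      intro j
      have hTj : T j ω = fun i => w (Equiv.swap j (Fin.last m) i) := rfl
      have hlast : w (Equiv.swap j (Fin.last m) (Fin.last m)) = w j := by
        rw [Equiv.swap_apply_right]
      simp only [Set.mem_preimage, hB, Set.mem_setOf_eq, hTj, hlast]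
      exact swap_count m w j k
    calc (univ.filter fun j : Fin (m+1) => ω ∈ T j ⁻¹' B).card
        = (univ.filter fun j : Fin (m+1) =>
            (univ.filter fun i : Fin (m+1) => w i ≤ w j).card ≤ k).card := by
          congr 1; ext j; simpa using hmem j
      _ ≤ k := card_low_rank_le w k
  -- sum of probabilities bound
  have hsum : (m + 1 : ℝ≥0∞) * P (J ⁻¹' B) ≤ (k : ℝ≥0∞) := by
    have h1 : ∑ j : Fin (m+1), P (T j ⁻¹' B) = (m + 1 : ℝ≥0∞) * P (J ⁻¹' B) := by
      rw [Finset.sum_congr rfl fun j _ => hsame j, Finset.sum_const, Finset.card_univ,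
        Fintype.card_fin, nsmul_eq_mul]
      push_cast
      ring
    have h2 : ∑ j : Fin (m+1), P (T j ⁻¹' B)
        = ∫⁻ ω, ∑ j : Fin (m+1), (T j ⁻¹' B).indicator (fun _ => (1:ℝ≥0∞)) ω ∂P := by
      rw [lintegral_finset_sum]
      · refine Finset.sum_congr rfl fun j _ => ?_
        rw [lintegral_indicator ((hTmeas j) hBmeas)]
        simp
      · exact fun j _ => measurable_one.indicator ((hTmeas j) hBmeas)
    have h3 : ∀ ω, ∑ j : Fin (m+1), (T j ⁻¹' B).indicator (fun _ => (1:ℝ≥0∞)) ω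
        ≤ (k : ℝ≥0∞) := by
      intro ω
      have : ∑ j : Fin (m+1), (T j ⁻¹' B).indicator (fun _ => (1:ℝ≥0∞)) ω
          = ((univ.filter fun j : Fin (m+1) => ω ∈ T j ⁻¹' B).card : ℝ≥0∞) := by
        rw [Finset.card_filter]
        push_cast
        refine Finset.sum_congr rfl fun j _ => ?_
        by_cases h : ω ∈ T j ⁻¹' B <;> simp [Set.indicator_apply, h]
      rw [this]
      exact_mod_cast Nat.cast_le.2 (hcount ω)
    calc (m + 1 : ℝ≥0∞) * P (J ⁻¹' B) = ∑ j : Fin (m+1), P (T j ⁻¹' B) := h1.symm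
      _ = _ := h2
      _ ≤ ∫⁻ _, (k : ℝ≥0∞) ∂P := lintegral_mono h3
      _ = (k : ℝ≥0∞) := by simp
  -- first conclusion
  have hofReal : ENNReal.ofReal ((k : ℝ) / (m + 1)) = (k : ℝ≥0∞) / ((m : ℝ≥0∞) + 1) := by
    rw [ENNReal.ofReal_div_of_pos (by positivity)]
    congr 1
    · exact ENNReal.ofReal_natCast k
    · rw [show ((m : ℝ) + 1) = ((m + 1 : ℕ) : ℝ) by push_cast; ring, ENNReal.ofReal_natCast]
      push_cast; ring
  have hfirst : P (J ⁻¹' B) ≤ ENNReal.ofReal ((k : ℝ) / (m + 1)) := by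
    have hne : ((m : ℝ≥0∞) + 1) ≠ 0 := (lt_of_lt_of_le zero_lt_one le_add_self).ne'
    rw [hofReal, ENNReal.le_div_iff_mul_le (Or.inl hne) (Or.inl (by simp))]
    rw [mul_comm] at hsum
    exact hsum
  refine ⟨hAeq ▸ hfirst, ?_⟩
  -- second conclusion via complement
  have hcompl : {ω | kthSmallest (fun i : Fin m => V i.castSucc ω) k ≤ V (Fin.last m) ω}
      = (J ⁻¹' B)ᶜ := by
    rw [← hAeq]
    ext ω; simp [not_lt]
  rw [hcompl, ge_iff_le]
  have hmeasA : MeasurableSet (J ⁻¹' B) := hJmeas hBmeas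
  rw [prob_compl_eq_one_sub hmeasA]
  have hx : (0:ℝ) ≤ (k : ℝ) / (m + 1) := by positivity
  rw [ENNReal.ofReal_sub _ hx, ENNReal.ofReal_one]
  exact tsub_le_tsub_left hfirst 1
end

section
/- There exists an absolute constant c > 0 with the following property. Let L ≥ 0, σ > 0, n ≥ 1, let f : ℝ → ℝ be L-Lipschitz, and let δ₁,…,δ_n be independent random variables each distributed N(0, σ²). Then for every η ∈ (0,1), with probability at least 1 − η, sup_{x ∈ ℝ} | f(x) − (1/n) Σ_{i=1}^n f(x + δ_i) | ≤ L σ √(2/π) + L σ √( log(2/η) / (c n) ). -/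
open MeasureTheory ProbabilityTheory Real Filter Set
open scoped NNReal ENNReal

namespace RSAux

lemma integral_id_exp_Ioi {b : ℝ} (hb : 0 < b) :
    ∫ x in Set.Ioi (0:ℝ), x * Real.exp (-b * x ^ 2) = 1 / (2 * b) := by
  have hderiv : ∀ x ∈ Set.Ici (0:ℝ),
      HasDerivAt (fun x : ℝ => -Real.exp (-b * x ^ 2) / (2 * b))
        (x * Real.exp (-b * x ^ 2)) x := by
    intro x _
    have h1 : HasDerivAt (fun x : ℝ => -b * x ^ 2) (-b * (2 * x)) x := by
      simpa using ((hasDerivAt_pow 2 x).const_mul (-b))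
    have h2 := (h1.exp).neg.div_const (2 * b)
    refine h2.congr_deriv ?_
    rw [div_eq_iff (by positivity)]
    ring
  have htend : Tendsto (fun x : ℝ => -Real.exp (-b * x ^ 2) / (2 * b)) atTop (nhds 0) := by
    have : Tendsto (fun x : ℝ => -b * x ^ 2) atTop atBot := by
      apply Tendsto.const_mul_atTop_of_neg (neg_neg_iff_pos.mpr hb)
      exact tendsto_pow_atTop (by norm_num)
    have := (Real.tendsto_exp_atBot.comp this).neg.div_const (2 * b)
    simpa using this
  have hint : IntegrableOn (fun x : ℝ => x * Real.exp (-b * x ^ 2)) (Set.Ioi 0) :=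
    (integrable_mul_exp_neg_mul_sq hb).integrableOn
  have := integral_Ioi_of_hasDerivAt_of_tendsto' hderiv hint htend
  rw [this]
  norm_num [Real.exp_zero]
  ring


variable {v : ℝ≥0}

lemma exp_mul_pdf (hv : v ≠ 0) (c x : ℝ) :
    Real.exp (c * x) * gaussianPDFReal 0 v x
      = Real.exp (c ^ 2 * v / 2) * gaussianPDFReal (c * v) v x := by
  have hv' : (v : ℝ) ≠ 0 := by exact_mod_cast hv
  simp only [gaussianPDFReal, sub_zero]
  rw [show Real.exp (c * x) * ((Real.sqrt (2 * π * v))⁻¹ * Real.exp (-x ^ 2 / (2 * v)))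
      = (Real.sqrt (2 * π * v))⁻¹ * Real.exp (c * x + -x ^ 2 / (2 * v)) by
    rw [Real.exp_add]; ring]
  rw [show Real.exp (c ^ 2 * v / 2) * ((Real.sqrt (2 * π * v))⁻¹
        * Real.exp (-(x - c * v) ^ 2 / (2 * v)))
      = (Real.sqrt (2 * π * v))⁻¹ * Real.exp (c ^ 2 * v / 2 + -(x - c * v) ^ 2 / (2 * v)) by
    rw [Real.exp_add]; ring]
  congr 1
  field_simp
  ring

lemma integrable_exp_mul_pdf (hv : v ≠ 0) (c : ℝ) :
    Integrable (fun x => Real.exp (c * x) * gaussianPDFReal 0 v x) := by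
  simp only [exp_mul_pdf hv c]
  exact (integrable_gaussianPDFReal (c * v) v).const_mul _

lemma integral_exp_mul_pdf (hv : v ≠ 0) (c : ℝ) :
    ∫ x, Real.exp (c * x) * gaussianPDFReal 0 v x = Real.exp (c ^ 2 * v / 2) := by
  simp only [exp_mul_pdf hv c]
  rw [integral_const_mul, integral_gaussianPDFReal_eq_one (c * v) hv, mul_one]

lemma pdf_eq (hv : v ≠ 0) (x : ℝ) :
    gaussianPDFReal 0 v x = (Real.sqrt (2 * π * v))⁻¹ * Real.exp (-(1 / (2 * v)) * x ^ 2) := by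
  simp only [gaussianPDFReal, sub_zero]
  congr 1
  ring

lemma integrable_abs_mul_pdf (hv : v ≠ 0) :
    Integrable (fun x => |x| * gaussianPDFReal 0 v x) := by
  have hvpos : (0:ℝ) < v := by positivity
  have hb : (0:ℝ) < 1 / (2 * v) := by positivity
  have h := ((integrable_mul_exp_neg_mul_sq hb).abs).const_mul (Real.sqrt (2 * π * (v:ℝ)))⁻¹
  refine h.congr (Filter.Eventually.of_forall fun x => ?_)
  dsimp only
  rw [pdf_eq hv x, abs_mul, abs_of_pos (Real.exp_pos _)]
  ring

lemma integral_abs_mul_pdf (hv : v ≠ 0) :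
    ∫ x, |x| * gaussianPDFReal 0 v x = Real.sqrt (2 * v / π) := by
  have hvpos : (0:ℝ) < v := by positivity
  have hb : (0:ℝ) < 1 / (2 * (v:ℝ)) := by positivity
  calc ∫ x, |x| * gaussianPDFReal 0 v x
      = (Real.sqrt (2 * π * (v:ℝ)))⁻¹ * ∫ x, |x| * Real.exp (-(1 / (2 * (v:ℝ))) * x ^ 2) := by
        rw [← integral_const_mul]
        congr 1 with x
        rw [pdf_eq hv x]; ring
    _ = (Real.sqrt (2 * π * (v:ℝ)))⁻¹ * (2 * ∫ x in Set.Ioi (0:ℝ), x * Real.exp (-(1 / (2 * (v:ℝ))) * x ^ 2)) := by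
        congr 1
        rw [← integral_comp_abs (f := fun y => y * Real.exp (-(1 / (2 * (v:ℝ))) * y ^ 2))]
        congr 1 with x
        rw [sq_abs]
    _ = (Real.sqrt (2 * π * (v:ℝ)))⁻¹ * (2 * (1 / (2 * (1 / (2 * (v:ℝ)))))) := by
        rw [integral_id_exp_Ioi hb]
    _ = Real.sqrt (2 * v / π) := by
        have hπ : (0:ℝ) < π := Real.pi_pos
        have hs : Real.sqrt (2 * (v:ℝ) / π) * Real.sqrt (2 * π * (v:ℝ)) = 2 * (v:ℝ) := by
          rw [← Real.sqrt_mul (by positivity)]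
          rw [show 2 * (v:ℝ) / π * (2 * π * (v:ℝ)) = (2 * (v:ℝ)) ^ 2 by field_simp]
          exact Real.sqrt_sq (by positivity)
        have hsq : (0:ℝ) < Real.sqrt (2 * π * (v:ℝ)) := Real.sqrt_pos.mpr (by positivity)
        rw [show (2:ℝ) * (1 / (2 * (1 / (2 * (v:ℝ))))) = 2 * (v:ℝ) by field_simp,
          inv_mul_eq_iff_eq_mul₀ hsq.ne']
        rw [mul_comm] at hs
        linarith [hs]

lemma integral_gaussianReal_eq (hv : v ≠ 0) (g : ℝ → ℝ) :
    ∫ x, g x ∂(gaussianReal 0 v) = ∫ x, gaussianPDFReal 0 v x * g x := by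
  rw [gaussianReal_of_var_ne_zero 0 hv]
  have h1 : (gaussianPDF 0 v) = fun x => ((gaussianPDFReal 0 v x).toNNReal : ℝ≥0∞) := rfl
  rw [h1, integral_withDensity_eq_integral_smul (measurable_gaussianPDFReal 0 v).real_toNNReal g]
  congr 1 with x
  rw [NNReal.smul_def, smul_eq_mul, Real.coe_toNNReal _ (gaussianPDFReal_nonneg 0 v x)]

lemma integrable_gaussianReal_iff (hv : v ≠ 0) (g : ℝ → ℝ) :
    Integrable g (gaussianReal 0 v) ↔ Integrable (fun x => gaussianPDFReal 0 v x * g x) := by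
  rw [gaussianReal_of_var_ne_zero 0 hv]
  have h1 : (gaussianPDF 0 v) = fun x => ((gaussianPDFReal 0 v x).toNNReal : ℝ≥0∞) := rfl
  rw [h1, integrable_withDensity_iff_integrable_smul (measurable_gaussianPDFReal 0 v).real_toNNReal]
  constructor <;> intro h <;> refine h.congr (Filter.Eventually.of_forall fun x => ?_) <;>
    simp [NNReal.smul_def, Real.coe_toNNReal _ (gaussianPDFReal_nonneg 0 v x)]

lemma exp_abs_le (u : ℝ) : Real.exp |u| ≤ Real.exp u + Real.exp (-u) - 1 + |u| := by
  have h1 : 1 + -|u| ≤ Real.exp (-|u|) := by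
    have := Real.add_one_le_exp (-|u|)
    linarith
  have h2 : Real.exp u + Real.exp (-u) = Real.exp |u| + Real.exp (-|u|) := by
    rcases abs_cases u with ⟨h, _⟩ | ⟨h, _⟩ <;> rw [h] <;>
      simp [neg_neg, add_comm]
  linarith

lemma integrable_exp_abs_gaussianReal (hv : v ≠ 0) (t : ℝ) :
    Integrable (fun x => Real.exp (t * |x|)) (gaussianReal 0 v) := by
  rw [integrable_gaussianReal_iff hv]
  have hint := (integrable_exp_mul_pdf hv t).add (integrable_exp_mul_pdf hv (-t))
  refine hint.mono' ?_ (Filter.Eventually.of_forall fun x => ?_)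
  · exact ((measurable_gaussianPDFReal 0 v).mul
      (by fun_prop : Measurable fun x : ℝ => Real.exp (t * |x|))).aestronglyMeasurable
  · have hpdf := gaussianPDFReal_nonneg 0 v x
    have h1 : Real.exp (t * |x|) ≤ Real.exp (t * x) + Real.exp (-t * x) := by
      have h2 : t * |x| ≤ |t * x| := by
        rw [abs_mul]
        exact mul_le_mul_of_nonneg_right (le_abs_self t) (abs_nonneg x)
      have h3 : Real.exp |t * x| ≤ Real.exp (t * x) + Real.exp (-(t * x)) := by
        rcases abs_cases (t * x) with ⟨h, _⟩ | ⟨h, _⟩ <;> rw [h] <;>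
          [linarith [(Real.exp_pos (-(t * x))).le]; linarith [(Real.exp_pos (t * x)).le]]
      calc Real.exp (t * |x|) ≤ Real.exp |t * x| := Real.exp_le_exp.mpr h2
        _ ≤ Real.exp (t * x) + Real.exp (-(t * x)) := h3
        _ = Real.exp (t * x) + Real.exp (-t * x) := by rw [neg_mul]
    rw [Real.norm_eq_abs, abs_of_nonneg (by positivity)]
    calc gaussianPDFReal 0 v x * Real.exp (t * |x|)
        ≤ gaussianPDFReal 0 v x * (Real.exp (t * x) + Real.exp (-t * x)) :=
          mul_le_mul_of_nonneg_left h1 hpdf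
      _ = Real.exp (t * x) * gaussianPDFReal 0 v x + Real.exp (-t * x) * gaussianPDFReal 0 v x := by
          ring

lemma integral_exp_abs_gaussianReal_le (hv : v ≠ 0) {t : ℝ} (ht : 0 ≤ t) :
    ∫ x, Real.exp (t * |x|) ∂(gaussianReal 0 v)
      ≤ Real.exp (t ^ 2 * v + t * Real.sqrt (2 * v / π)) := by
  set μ₀ : ℝ := Real.sqrt (2 * v / π) with hμ₀
  have hμ₀0 : 0 ≤ μ₀ := Real.sqrt_nonneg _
  rw [integral_gaussianReal_eq hv]
  set g2 : ℝ → ℝ := fun x => Real.exp (t * x) * gaussianPDFReal 0 v x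
      + Real.exp (-t * x) * gaussianPDFReal 0 v x - gaussianPDFReal 0 v x
      + t * (|x| * gaussianPDFReal 0 v x) with hg2
  have hint_negt : Integrable (fun x => Real.exp (-t * x) * gaussianPDFReal 0 v x) :=
    integrable_exp_mul_pdf hv (-t)
  have hint2 : Integrable g2 :=
    (((integrable_exp_mul_pdf hv t).add hint_negt).sub
      (integrable_gaussianPDFReal 0 v)).add ((integrable_abs_mul_pdf hv).const_mul t)
  have hint1 : Integrable (fun x => gaussianPDFReal 0 v x * Real.exp (t * |x|)) := by
    rw [← integrable_gaussianReal_iff hv]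
    exact integrable_exp_abs_gaussianReal hv t
  have hmono : ∫ x, gaussianPDFReal 0 v x * Real.exp (t * |x|) ≤ ∫ x, g2 x := by
    refine integral_mono hint1 hint2 fun x => ?_
    have hpdf := gaussianPDFReal_nonneg 0 v x
    have habs : t * |x| = |t * x| := by
      rw [abs_mul, abs_of_nonneg ht]
    have h1 : Real.exp (t * |x|) ≤ Real.exp (t * x) + Real.exp (-t * x) - 1 + t * |x| := by
      rw [habs, neg_mul]
      exact exp_abs_le (t * x)
    calc gaussianPDFReal 0 v x * Real.exp (t * |x|)
        ≤ gaussianPDFReal 0 v x * (Real.exp (t * x) + Real.exp (-t * x) - 1 + t * |x|) :=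
          mul_le_mul_of_nonneg_left h1 hpdf
      _ = g2 x := by simp only [hg2]; ring
  have hintAB : Integrable (fun x => Real.exp (t * x) * gaussianPDFReal 0 v x
      + Real.exp (-t * x) * gaussianPDFReal 0 v x) :=
    (integrable_exp_mul_pdf hv t).add hint_negt
  have hintABC : Integrable (fun x => Real.exp (t * x) * gaussianPDFReal 0 v x
      + Real.exp (-t * x) * gaussianPDFReal 0 v x - gaussianPDFReal 0 v x) :=
    hintAB.sub (integrable_gaussianPDFReal 0 v)
  have hintD : Integrable (fun x => t * (|x| * gaussianPDFReal 0 v x)) :=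
    (integrable_abs_mul_pdf hv).const_mul t
  have hval : ∫ x, g2 x = Real.exp (t ^ 2 * v / 2) + Real.exp (t ^ 2 * v / 2) - 1 + t * μ₀ := by
    rw [hg2]
    rw [integral_add hintABC hintD, integral_sub hintAB (integrable_gaussianPDFReal 0 v),
      integral_add (integrable_exp_mul_pdf hv t) hint_negt,
      integral_exp_mul_pdf hv t, integral_exp_mul_pdf hv (-t),
      integral_gaussianPDFReal_eq_one 0 hv, integral_const_mul, integral_abs_mul_pdf hv]
    rw [neg_sq]
  rw [hval] at hmono
  refine hmono.trans ?_
  have hE : Real.exp (t ^ 2 * v + t * μ₀)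
      = Real.exp (t ^ 2 * v / 2) * Real.exp (t ^ 2 * v / 2) * Real.exp (t * μ₀) := by
    rw [← Real.exp_add, ← Real.exp_add]
    congr 1
    ring
  have h1 : 1 ≤ Real.exp (t ^ 2 * (v:ℝ) / 2) := Real.one_le_exp (by positivity)
  have h2 : t * μ₀ + 1 ≤ Real.exp (t * μ₀) := Real.add_one_le_exp _
  have h3 : 0 ≤ t * μ₀ := mul_nonneg ht hμ₀0
  have hEpos : 0 < Real.exp (t ^ 2 * (v:ℝ) / 2) := Real.exp_pos _
  rw [hE]
  set E := Real.exp (t ^ 2 * (v:ℝ) / 2)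
  set M := Real.exp (t * μ₀)
  calc E + E - 1 + t * μ₀ ≤ E * E + t * μ₀ := by nlinarith [sq_nonneg (E - 1)]
    _ ≤ E * E * (1 + t * μ₀) := by
        have hE2 : 1 ≤ E * E := by nlinarith
        nlinarith [mul_nonneg h3 (sub_nonneg.mpr hE2)]
    _ ≤ E * E * M := by
        have : 1 + t * μ₀ ≤ M := by linarith
        exact mul_le_mul_of_nonneg_left this (by positivity)

end RSAux

open MeasureTheory ProbabilityTheory



/-- **Hoeffding-type bound for randomized smoothing.** There is an absolute constant `c > 0`
such that for any `L`-Lipschitz `f` and i.i.d. `N(0,σ²)` noises `δ₁, …, δₙ`, with probability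
at least `1 - η` the randomized-smoothing average is uniformly within
`Lσ√(2/π) + Lσ√(log(2/η)/(cn))` of `f`. -/
theorem randomized_smoothing_concentration :
    ∃ c : ℝ, 0 < c ∧
      ∀ (Ω : Type) [MeasurableSpace Ω] (P : Measure Ω) [IsProbabilityMeasure P]
        (L σ : ℝ) (_ : 0 ≤ L) (_ : 0 < σ) (n : ℕ) (_ : 1 ≤ n)
        (f : ℝ → ℝ) (_ : ∀ x y, |f x - f y| ≤ L * |x - y|)
        (δ : Fin n → Ω → ℝ) (_ : ∀ i, Measurable (δ i))
        (_ : iIndepFun δ P)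
        (_ : ∀ i, Measure.map (δ i) P = gaussianReal 0 (Real.toNNReal (σ ^ 2)))
        (η : ℝ) (_ : η ∈ Set.Ioo (0 : ℝ) 1),
        P {ω | ∀ x : ℝ, |f x - (1 / n : ℝ) * ∑ i, f (x + δ i ω)|
              ≤ L * σ * Real.sqrt (2 / Real.pi)
                + L * σ * Real.sqrt (Real.log (2 / η) / (c * n))}
          ≥ ENNReal.ofReal (1 - η) := by
  refine ⟨1/4, by norm_num, ?_⟩
  intro Ω _ P _ L σ hL hσ n hn f hf δ hδmeas hindep hmap η hη
  obtain ⟨hη0, hη1⟩ := hη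
  have hπ := Real.pi_pos
  set v : ℝ≥0 := Real.toNNReal (σ ^ 2) with hv
  have hvr : (v : ℝ) = σ ^ 2 := Real.coe_toNNReal _ (by positivity)
  have hv0 : v ≠ 0 := by
    intro h
    rw [h] at hvr
    simp at hvr
    nlinarith
  set μ₀ : ℝ := σ * Real.sqrt (2 / Real.pi) with hμ₀
  have hμ₀0 : 0 ≤ μ₀ := by positivity
  have hμ₀' : Real.sqrt (2 * (v:ℝ) / Real.pi) = μ₀ := by
    rw [hvr, hμ₀, show 2 * σ ^ 2 / Real.pi = σ ^ 2 * (2 / Real.pi) by ring,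
      Real.sqrt_mul (sq_nonneg σ), Real.sqrt_sq hσ.le]
  have hlog : 0 < Real.log (2 / η) := Real.log_pos (by rw [lt_div_iff₀ hη0]; linarith)
  have hn0 : (0:ℝ) < (n:ℝ) := by exact_mod_cast Nat.lt_of_lt_of_le Nat.zero_lt_one hn
  set s : ℝ := σ * Real.sqrt (Real.log (2 / η) / (1 / 4 * (n:ℝ))) with hs
  have hs0 : 0 < s := mul_pos hσ (Real.sqrt_pos.mpr (by positivity))
  have hs2 : s ^ 2 = 4 * σ ^ 2 * Real.log (2 / η) / (n:ℝ) := by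
    rw [hs, mul_pow, Real.sq_sqrt (by positivity)]
    field_simp
  set t : ℝ := s / (2 * σ ^ 2) with ht
  have ht0 : 0 ≤ t := by positivity
  set X : Fin n → Ω → ℝ := fun i ω => |δ i ω| with hX
  have hXmeas : ∀ i, Measurable (X i) := fun i => (hδmeas i).abs
  have hXindep : iIndepFun X P :=
    hindep.comp (fun _ => fun x => |x|) (fun _ => measurable_abs)
  have hmm : Measurable fun x : ℝ => Real.exp (t * |x|) := by fun_prop
  have hXint : ∀ i, Integrable (fun ω => Real.exp (t * X i ω)) P := by
    intro i
    have h1 : Integrable ((fun x => Real.exp (t * |x|)) ∘ (δ i)) P := by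
      rw [← integrable_map_measure hmm.aestronglyMeasurable (hδmeas i).aemeasurable, hmap i]
      exact RSAux.integrable_exp_abs_gaussianReal hv0 t
    exact h1
  have hmgf : ∀ i, mgf (X i) P t ≤ Real.exp (t ^ 2 * σ ^ 2 + t * μ₀) := by
    intro i
    have h2 : mgf (X i) P t = ∫ x, Real.exp (t * |x|) ∂(gaussianReal 0 v) := by
      rw [← hmap i, integral_map (hδmeas i).aemeasurable hmm.aestronglyMeasurable]
      rfl
    rw [h2]
    have h3 := RSAux.integral_exp_abs_gaussianReal_le hv0 ht0
    rwa [hμ₀', hvr] at h3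
  set ε : ℝ := (n:ℝ) * (μ₀ + s) with hε
  have hSint : Integrable (fun ω => Real.exp (t * (∑ i, X i) ω)) P :=
    hXindep.integrable_exp_mul_sum hXmeas (fun i _ => hXint i)
  have hchern := measure_ge_le_exp_mul_mgf (μ := P) (X := ∑ i, X i) ε ht0 hSint
  have hprod : mgf (∑ i, X i) P t ≤ Real.exp ((n:ℝ) * (t ^ 2 * σ ^ 2 + t * μ₀)) := by
    rw [hXindep.mgf_sum hXmeas Finset.univ]
    calc ∏ i : Fin n, mgf (X i) P t
        ≤ ∏ _i : Fin n, Real.exp (t ^ 2 * σ ^ 2 + t * μ₀) :=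
          Finset.prod_le_prod (fun i _ => mgf_nonneg) (fun i _ => hmgf i)
      _ = Real.exp (t ^ 2 * σ ^ 2 + t * μ₀) ^ n := by
          rw [Finset.prod_const, Finset.card_univ, Fintype.card_fin]
      _ = Real.exp ((n:ℝ) * (t ^ 2 * σ ^ 2 + t * μ₀)) := by
          rw [← Real.exp_nat_mul]
  have hchern2 : (P {ω | ε ≤ (∑ i, X i) ω}).toReal ≤ η / 2 := by
    refine hchern.trans ?_
    have h4 : Real.exp (-t * ε) * mgf (∑ i, X i) P t
        ≤ Real.exp (-t * ε) * Real.exp ((n:ℝ) * (t ^ 2 * σ ^ 2 + t * μ₀)) :=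
      mul_le_mul_of_nonneg_left hprod (Real.exp_pos _).le
    refine h4.trans ?_
    rw [← Real.exp_add]
    have harith : -t * ε + (n:ℝ) * (t ^ 2 * σ ^ 2 + t * μ₀) = -((n:ℝ) * s ^ 2 / (4 * σ ^ 2)) := by
      rw [ht, hε]
      field_simp
      ring
    have harith2 : (n:ℝ) * s ^ 2 / (4 * σ ^ 2) = Real.log (2 / η) := by
      rw [hs2]
      field_simp
    rw [harith, harith2, Real.exp_neg, Real.exp_log (by positivity), inv_div]
  -- bad event
  set Bad : Set Ω := {ω | ε ≤ (∑ i, X i) ω} with hBad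
  have hBadMeas : MeasurableSet Bad :=
    measurableSet_le measurable_const (by
      have h6 : Measurable fun a => ∑ i : Fin n, X i a :=
        Finset.measurable_sum Finset.univ fun i _ => hXmeas i
      convert h6 using 1
      funext a
      exact Finset.sum_apply a Finset.univ X)
  have hPBad : P Bad ≤ ENNReal.ofReal η := by
    rw [← ENNReal.ofReal_toReal (measure_ne_top P Bad)]
    exact ENNReal.ofReal_le_ofReal (hchern2.trans (by linarith))
  -- inclusion
  have hsub : Badᶜ ⊆ {ω | ∀ x : ℝ, |f x - (1 / n : ℝ) * ∑ i, f (x + δ i ω)|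
      ≤ L * σ * Real.sqrt (2 / Real.pi)
        + L * σ * Real.sqrt (Real.log (2 / η) / (1 / 4 * (n:ℝ)))} := by
    intro ω hω x
    have hωlt : (∑ i, X i) ω < ε := lt_of_not_ge hω
    have hsum : ∑ i, X i ω < ε := by
      rwa [Finset.sum_apply] at hωlt
    have h1 : f x - (1 / n : ℝ) * ∑ i, f (x + δ i ω)
        = (1 / n : ℝ) * ∑ i : Fin n, (f x - f (x + δ i ω)) := by
      rw [Finset.sum_sub_distrib, Finset.sum_const, Finset.card_univ, Fintype.card_fin,
        nsmul_eq_mul]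
      field_simp
    rw [h1, abs_mul, abs_of_nonneg (by positivity : (0:ℝ) ≤ 1 / (n:ℝ))]
    have h2 : |∑ i : Fin n, (f x - f (x + δ i ω))| ≤ ∑ i : Fin n, L * |δ i ω| := by
      refine (Finset.abs_sum_le_sum_abs _ _).trans (Finset.sum_le_sum fun i _ => ?_)
      have h3 := hf x (x + δ i ω)
      have h4 : x - (x + δ i ω) = -(δ i ω) := by ring
      rwa [h4, abs_neg] at h3
    have h5 : ∑ i : Fin n, L * |δ i ω| = L * ∑ i, X i ω := by
      rw [Finset.mul_sum]
    calc (1 / (n:ℝ)) * |∑ i : Fin n, (f x - f (x + δ i ω))|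
        ≤ (1 / (n:ℝ)) * (L * ∑ i, X i ω) := by
          rw [← h5]
          exact mul_le_mul_of_nonneg_left h2 (by positivity)
      _ ≤ (1 / (n:ℝ)) * (L * ε) := by
          refine mul_le_mul_of_nonneg_left (mul_le_mul_of_nonneg_left ?_ hL) (by positivity)
          · refine le_of_lt hsum
      _ = L * μ₀ + L * s := by
          rw [hε]
          field_simp
      _ = L * σ * Real.sqrt (2 / Real.pi)
          + L * σ * Real.sqrt (Real.log (2 / η) / (1 / 4 * (n:ℝ))) := by
          rw [hμ₀, hs]
          ring
  calc ENNReal.ofReal (1 - η)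
      = 1 - ENNReal.ofReal η := by
        rw [ENNReal.ofReal_sub 1 hη0.le, ENNReal.ofReal_one]
    _ ≤ 1 - P Bad := tsub_le_tsub_left hPBad 1
    _ = P Badᶜ := (prob_compl_eq_one_sub hBadMeas).symm
    _ ≤ P _ := measure_mono hsub
end

section
/- Let L ≥ 0, σ > 0, let f : ℝ → ℝ be L-Lipschitz, and let δ₁, δ₂, … be an i.i.d. sequence of N(0, σ²) random variables. Then almost surely, sup_{x ∈ ℝ} | (1/n) Σ_{i=1}^n f(x + δ_i) − ∫_ℝ f(x + u) φ_σ(u) du | → 0 as n → ∞; that is, the randomized-smoothing estimates converge uniformly on ℝ to the Gaussian convolution φ_σ * f almost surely. -/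
open MeasureTheory ProbabilityTheory Filter
open scoped NNReal ENNReal Topology

noncomputable def gaussianKernel (σ u : ℝ) : ℝ :=
  (σ * Real.sqrt (2 * Real.pi))⁻¹ * Real.exp (-(u ^ 2) / (2 * σ ^ 2))

lemma RS.vne {σ : ℝ} (hσ : 0 < σ) : Real.toNNReal (σ ^ 2) ≠ 0 := by
  simp [Real.toNNReal_eq_zero, not_le, pow_pos hσ, hσ.ne']

lemma RS.pdf_eq {σ : ℝ} (hσ : 0 < σ) (u : ℝ) :
    gaussianPDFReal 0 (Real.toNNReal (σ ^ 2)) u = gaussianKernel σ u := by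
  simp only [gaussianPDFReal, gaussianKernel]
  have h2 : Real.toNNReal (σ ^ 2) = (σ ^ 2 : ℝ) := Real.coe_toNNReal _ (sq_nonneg σ)
  rw [h2]
  have : Real.sqrt (2 * Real.pi * σ ^ 2) = σ * Real.sqrt (2 * Real.pi) := by
    rw [Real.sqrt_mul (by positivity), Real.sqrt_sq hσ.le]
    ring
  rw [this, sub_zero]

lemma RS.integral_eq {σ : ℝ} (hσ : 0 < σ) (g : ℝ → ℝ) :
    ∫ u, g u ∂(gaussianReal 0 (Real.toNNReal (σ ^ 2)))
      = ∫ u, gaussianPDFReal 0 (Real.toNNReal (σ ^ 2)) u * g u := by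
  set v := Real.toNNReal (σ ^ 2)
  rw [gaussianReal_of_var_ne_zero _ (RS.vne hσ)]
  have hd : gaussianPDF 0 v = fun x => ((Real.toNNReal (gaussianPDFReal 0 v x) : ℝ≥0) : ℝ≥0∞) :=
    rfl
  rw [hd, integral_withDensity_eq_integral_smul
    ((measurable_gaussianPDFReal 0 v).real_toNNReal)]
  congr 1
  ext u
  rw [NNReal.smul_def, Real.coe_toNNReal _ (gaussianPDFReal_nonneg 0 v u), smul_eq_mul]

lemma RS.integrable_iff {σ : ℝ} (hσ : 0 < σ) (g : ℝ → ℝ) :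
    Integrable g (gaussianReal 0 (Real.toNNReal (σ ^ 2)))
      ↔ Integrable (fun u => g u * gaussianPDFReal 0 (Real.toNNReal (σ ^ 2)) u) := by
  set v := Real.toNNReal (σ ^ 2)
  rw [gaussianReal_of_var_ne_zero _ (RS.vne hσ), gaussianPDF_def,
    integrable_withDensity_iff (measurable_gaussianPDFReal 0 v).ennreal_ofReal
      (Eventually.of_forall fun _ => ENNReal.ofReal_lt_top)]
  simp only [ENNReal.toReal_ofReal (gaussianPDFReal_nonneg 0 v _)]

lemma RS.integrable_abs {σ : ℝ} (hσ : 0 < σ) :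
    Integrable (fun u : ℝ => |u|) (gaussianReal 0 (Real.toNNReal (σ ^ 2))) := by
  rw [RS.integrable_iff hσ]
  have hb : (0:ℝ) < (2 * σ ^ 2)⁻¹ := by positivity
  have h1 := (integrable_mul_exp_neg_mul_sq hb).abs
  have h2 := h1.const_mul (Real.sqrt (2 * Real.pi * (Real.toNNReal (σ ^ 2))))⁻¹
  refine h2.congr (ae_of_all _ fun u => ?_)
  simp only [gaussianPDFReal]
  have h3 : Real.toNNReal (σ ^ 2) = (σ ^ 2 : ℝ) := Real.coe_toNNReal _ (sq_nonneg σ)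
  rw [abs_mul, abs_of_pos (Real.exp_pos _), h3, sub_zero]
  rw [show -(2 * σ ^ 2)⁻¹ * u ^ 2 = -u ^ 2 / (2 * σ ^ 2) by ring]
  ring

noncomputable def RS.tail (M : ℕ) (u : ℝ) : ℝ := if (M : ℝ) ≤ |u| then |u| else 0

def RS.q (M K j : ℕ) : ℚ := -(M : ℚ) + (j : ℚ) * (K : ℚ)⁻¹

noncomputable def RS.ind (M K j : ℕ) : ℝ → ℝ :=
  Set.indicator (Set.Ico ((RS.q M K j : ℚ) : ℝ) ((RS.q M K (j+1) : ℚ) : ℝ)) 1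

lemma RS.q_cast (M K j : ℕ) : ((RS.q M K j : ℚ) : ℝ) = -(M : ℝ) + (j : ℝ) * (K : ℝ)⁻¹ := by
  unfold RS.q; push_cast; ring

lemma RS.tail_nonneg (M : ℕ) (u : ℝ) : 0 ≤ RS.tail M u := by
  unfold RS.tail; split <;> simp [abs_nonneg]

lemma RS.tail_le_abs (M : ℕ) (u : ℝ) : RS.tail M u ≤ |u| := by
  unfold RS.tail; split <;> simp [abs_nonneg]

lemma RS.tail_measurable (M : ℕ) : Measurable (RS.tail M) := by
  unfold RS.tail
  exact Measurable.ite (measurableSet_le measurable_const continuous_abs.measurable)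
    continuous_abs.measurable measurable_const

lemma RS.tail_integrable {σ : ℝ} (hσ : 0 < σ) (M : ℕ) :
    Integrable (RS.tail M) (gaussianReal 0 (Real.toNNReal (σ ^ 2))) := by
  refine (RS.integrable_abs hσ).mono' (RS.tail_measurable M).aestronglyMeasurable ?_
  refine Eventually.of_forall fun u => ?_
  rw [Real.norm_eq_abs, abs_of_nonneg (RS.tail_nonneg M u)]
  exact RS.tail_le_abs M u

lemma RS.ind_measurable (M K j : ℕ) : Measurable (RS.ind M K j) :=
  measurable_const.indicator measurableSet_Ico

lemma RS.ind_integrable {σ : ℝ} (hσ : 0 < σ) (M K j : ℕ) :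
    Integrable (RS.ind M K j) (gaussianReal 0 (Real.toNNReal (σ ^ 2))) :=
  (integrable_const (1 : ℝ)).indicator measurableSet_Ico

lemma RS.slln {Ω : Type*} [MeasurableSpace Ω] (P : Measure Ω) [IsProbabilityMeasure P]
    {σ : ℝ} (δ : ℕ → Ω → ℝ) (hmeas : ∀ i, Measurable (δ i))
    (hindep : iIndepFun δ P)
    (hgauss : ∀ i, Measure.map (δ i) P = gaussianReal 0 (Real.toNNReal (σ ^ 2)))
    (h : ℝ → ℝ) (hh : Measurable h)
    (hint : Integrable h (gaussianReal 0 (Real.toNNReal (σ ^ 2)))) :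
    ∀ᵐ ω ∂P, Tendsto (fun n : ℕ => (n : ℝ)⁻¹ * ∑ i ∈ Finset.range n, h (δ i ω)) atTop
      (𝓝 (∫ u, h u ∂(gaussianReal 0 (Real.toNNReal (σ ^ 2))))) := by
  set γ := gaussianReal 0 (Real.toNNReal (σ ^ 2))
  have hint0 : Integrable (h ∘ δ 0) P := by
    rw [← hgauss 0] at hint
    exact (integrable_map_measure hh.aestronglyMeasurable (hmeas 0).aemeasurable).mp hint
  have hid : ∀ i, IdentDistrib (h ∘ δ i) (h ∘ δ 0) P P := by
    intro i
    refine ⟨(hh.comp (hmeas i)).aemeasurable, (hh.comp (hmeas 0)).aemeasurable, ?_⟩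
    rw [← Measure.map_map hh (hmeas i), ← Measure.map_map hh (hmeas 0), hgauss i, hgauss 0]
  have hpi : Pairwise (Function.onFun (IndepFun · · P) fun i => h ∘ δ i) :=
    fun i j hij => (hindep.indepFun hij).comp hh hh
  have key := strong_law_ae (fun i => h ∘ δ i) hint0 hpi hid
  have hI : ∫ ω, (h ∘ δ 0) ω ∂P = ∫ u, h u ∂γ := by
    rw [← hgauss 0, integral_map (hmeas 0).aemeasurable hh.aestronglyMeasurable]
    rfl
  filter_upwards [key] with ω hω
  rw [← hI]
  simpa [smul_eq_mul] using hω
lemma RS.est (L σ : ℝ) (hL : 0 ≤ L) (hσ : 0 < σ)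
    (f : ℝ → ℝ) (hf : ∀ x y, |f x - f y| ≤ L * |x - y|) (hfc : Continuous f)
    (M K : ℕ) (hM : 1 ≤ M) (hK : 1 ≤ K)
    (a : ℕ → ℝ) (n : ℕ) (hn : 1 ≤ n) (x : ℝ) :
    |(∫ u, f (x + u) ∂(gaussianReal 0 (Real.toNNReal (σ ^ 2))))
        - (n : ℝ)⁻¹ * ∑ i ∈ Finset.range n, f (x + a i)|
      ≤ 2 * (L * (K : ℝ)⁻¹)
        + L * ((n : ℝ)⁻¹ * ∑ i ∈ Finset.range n, RS.tail M (a i))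
        + L * (∫ u, RS.tail M u ∂(gaussianReal 0 (Real.toNNReal (σ ^ 2))))
        + (L * M) * ∑ j ∈ Finset.range (2 * M * K),
            |(n : ℝ)⁻¹ * ∑ i ∈ Finset.range n, RS.ind M K j (a i)
              - ∫ u, RS.ind M K j u ∂(gaussianReal 0 (Real.toNNReal (σ ^ 2)))| := by
  set γ := gaussianReal 0 (Real.toNNReal (σ ^ 2)) with hγ
  have hK0 : (0 : ℝ) < (K : ℝ) := by exact_mod_cast hK
  have hn0 : (0 : ℝ) < (n : ℝ) := by exact_mod_cast hn
  set m := 2 * M * K with hm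
  set t : ℕ → ℝ := fun j => ((RS.q M K j : ℚ) : ℝ) with ht
  have htj : ∀ j : ℕ, t j = -(M : ℝ) + (j : ℝ) * (K : ℝ)⁻¹ := fun j => RS.q_cast M K j
  have ht_mono : ∀ {i j : ℕ}, i ≤ j → t i ≤ t j := by
    intro i j hij
    rw [htj, htj]
    have : (i : ℝ) * (K : ℝ)⁻¹ ≤ (j : ℝ) * (K : ℝ)⁻¹ :=
      mul_le_mul_of_nonneg_right (by exact_mod_cast hij) (by positivity)
    linarith
  have ht_lb : ∀ j : ℕ, -(M : ℝ) ≤ t j := by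
    intro j; rw [htj]; have : (0:ℝ) ≤ (j : ℝ) * (K : ℝ)⁻¹ := by positivity
    linarith
  have ht_ub : ∀ j : ℕ, j ≤ m → t j ≤ (M : ℝ) := by
    intro j hjm
    rw [htj]
    have h1 : (j : ℝ) ≤ (m : ℝ) := by exact_mod_cast hjm
    have h2 : (j : ℝ) * (K : ℝ)⁻¹ ≤ (m : ℝ) * (K : ℝ)⁻¹ :=
      mul_le_mul_of_nonneg_right h1 (by positivity)
    have h3 : (m : ℝ) * (K : ℝ)⁻¹ = 2 * (M : ℝ) := by
      rw [hm]; push_cast; field_simp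
    linarith
  have ht_step : ∀ j : ℕ, t (j + 1) - t j = (K : ℝ)⁻¹ := by
    intro j; rw [htj, htj]; push_cast; ring
  -- the centered function and its step approximation
  set g : ℝ → ℝ := fun u => f (x + u) - f x with hgdef
  set gv : ℕ → ℝ := fun j => f (x + t j) - f x with hgv
  set s : ℝ → ℝ := fun u => ∑ j ∈ Finset.range m, gv j * RS.ind M K j u with hs
  have hind_t : ∀ j, RS.ind M K j = Set.indicator (Set.Ico (t j) (t (j+1))) 1 := fun j => rfl
  have hgv_bd : ∀ j ∈ Finset.range m, |gv j| ≤ L * M := by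
    intro j hj
    have hjm : j ≤ m := le_of_lt (Finset.mem_range.mp hj)
    calc |gv j| = |f (x + t j) - f x| := rfl
      _ ≤ L * |x + t j - x| := hf _ _
      _ = L * |t j| := by ring_nf
      _ ≤ L * M := by
          refine mul_le_mul_of_nonneg_left ?_ hL
          rw [abs_le]; exact ⟨ht_lb j, ht_ub j hjm⟩
  -- pointwise bound
  have hpt : ∀ u, |g u - s u| ≤ L * (K : ℝ)⁻¹ + L * RS.tail M u := by
    intro u
    by_cases hu : u ∈ Set.Ico (-(M : ℝ)) (M : ℝ)
    · obtain ⟨hu1, hu2⟩ := hu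
      set j := ⌊(u + M) * K⌋₊ with hjdef
      have huM : (0:ℝ) ≤ (u + M) * K := mul_nonneg (by linarith) (by positivity)
      have hj1 : (j : ℝ) ≤ (u + M) * K := Nat.floor_le huM
      have hj2 : (u + M) * K < (j : ℝ) + 1 := Nat.lt_floor_add_one _
      have hjm : j < m := by
        rw [hjdef, Nat.floor_lt huM]
        have : (u + M) * K < (2 * M) * K := by
          apply mul_lt_mul_of_pos_right _ hK0; linarith
        calc (u + (M:ℝ)) * K < (2 * M) * K := this
          _ = (m : ℝ) := by rw [hm]; push_cast; ring
      have htj_le : t j ≤ u := by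
        rw [htj]
        have : (j : ℝ) * (K : ℝ)⁻¹ ≤ u + M := by
          rw [← div_eq_mul_inv, div_le_iff₀ hK0]; exact hj1
        linarith
      have hu_lt : u < t (j + 1) := by
        have h2 : u + (M:ℝ) < ((j:ℝ) + 1) * (K : ℝ)⁻¹ := by
          rw [← div_eq_mul_inv, lt_div_iff₀ hK0]; exact hj2
        rw [htj]; push_cast; linarith
      have hsu : s u = gv j := by
        rw [hs]
        dsimp only
        rw [Finset.sum_eq_single_of_mem j (Finset.mem_range.mpr hjm)]
        · have hmem : u ∈ Set.Ico (t j) (t (j+1)) := ⟨htj_le, hu_lt⟩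
          rw [hind_t, Set.indicator_of_mem hmem, Pi.one_apply, mul_one]
        · intro b hb hbj
          rw [hind_t, Set.indicator_of_notMem, mul_zero]
          intro ⟨hb1, hb2⟩
          rcases lt_or_gt_of_ne hbj with hlt | hgt
          · have : t (b + 1) ≤ t j := ht_mono hlt
            linarith
          · have : t (j + 1) ≤ t b := ht_mono hgt
            linarith
      rw [hsu]
      have : |g u - gv j| ≤ L * (K : ℝ)⁻¹ := by
        have he : g u - gv j = f (x + u) - f (x + t j) := by rw [hgdef, hgv]; ring
        rw [he]
        calc |f (x + u) - f (x + t j)| ≤ L * |x + u - (x + t j)| := hf _ _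
          _ = L * |u - t j| := by ring_nf
          _ ≤ L * (K : ℝ)⁻¹ := by
              refine mul_le_mul_of_nonneg_left ?_ hL
              rw [abs_of_nonneg (by linarith)]
              have := ht_step j
              linarith
      have h0 : 0 ≤ L * RS.tail M u := mul_nonneg hL (RS.tail_nonneg M u)
      linarith
    · have habs : (M : ℝ) ≤ |u| := by
        rcases le_or_gt (-(M:ℝ)) u with h1 | h1
        · have h2 : (M:ℝ) ≤ u := by
            by_contra h3
            exact hu ⟨h1, lt_of_not_ge h3⟩
          calc (M:ℝ) ≤ u := h2
            _ ≤ |u| := le_abs_self u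
        · have hu0 : u < 0 := by
            have : (0:ℝ) ≤ (M:ℝ) := by positivity
            linarith
          rw [abs_of_neg hu0]; linarith
      have hsu : s u = 0 := by
        rw [hs]
        dsimp only
        refine Finset.sum_eq_zero fun j hj => ?_
        have hjm : j + 1 ≤ m := Finset.mem_range.mp hj
        rw [hind_t, Set.indicator_of_notMem, mul_zero]
        intro ⟨hb1, hb2⟩
        have h1 : -(M:ℝ) ≤ u := le_trans (ht_lb j) hb1
        have h2 : u < (M:ℝ) := lt_of_lt_of_le hb2 (ht_ub (j+1) hjm)
        exact hu ⟨h1, h2⟩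
      rw [hsu, sub_zero]
      have htail : RS.tail M u = |u| := if_pos habs
      have : |g u| ≤ L * |u| := by
        calc |g u| = |f (x + u) - f x| := rfl
          _ ≤ L * |x + u - x| := hf _ _
          _ = L * |u| := by ring_nf
      rw [htail]
      have h0 : 0 ≤ L * (K:ℝ)⁻¹ := by positivity
      linarith
  -- integrability
  have hfx_int : Integrable (fun u => f (x + u)) γ := by
    refine Integrable.mono' ((integrable_const |f x|).add ((RS.integrable_abs hσ).const_mul L))
      ((hfc.comp (continuous_const.add continuous_id)).aestronglyMeasurable) ?_
    refine Eventually.of_forall fun u => ?_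
    rw [Real.norm_eq_abs]
    have h1 : |f (x + u) - f x| ≤ L * |u| := by
      calc |f (x + u) - f x| ≤ L * |x + u - x| := hf _ _
        _ = L * |u| := by ring_nf
    have := abs_sub_abs_le_abs_sub (f (x + u)) (f x)
    simp only [Pi.add_apply]
    linarith
  have hg_int : Integrable g γ := hfx_int.sub (integrable_const (f x))
  have hind_int : ∀ j, Integrable (RS.ind M K j) γ := fun j => RS.ind_integrable hσ M K j
  have hs_int : Integrable s γ := by
    rw [hs]
    refine integrable_finset_sum _ fun j _ => (hind_int j).const_mul _
  have htail_int : Integrable (RS.tail M) γ := RS.tail_integrable hσ M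
  -- Step A
  have hA : (∫ u, f (x + u) ∂γ) - (n : ℝ)⁻¹ * ∑ i ∈ Finset.range n, f (x + a i)
      = (∫ u, g u ∂γ) - (n : ℝ)⁻¹ * ∑ i ∈ Finset.range n, g (a i) := by
    have h1 : ∫ u, f (x + u) ∂γ = (∫ u, g u ∂γ) + f x := by
      have : ∀ u, f (x + u) = g u + f x := fun u => by rw [hgdef]; ring
      rw [show (fun u => f (x + u)) = fun u => g u + f x from funext this,
        integral_add hg_int (integrable_const _), integral_const]
      simp
    have h2 : (n : ℝ)⁻¹ * ∑ i ∈ Finset.range n, f (x + a i)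
        = (n : ℝ)⁻¹ * ∑ i ∈ Finset.range n, g (a i) + f x := by
      have : ∀ i, f (x + a i) = g (a i) + f x := fun i => by rw [hgdef]; ring
      rw [Finset.sum_congr rfl fun i _ => this i, Finset.sum_add_distrib, Finset.sum_const,
        Finset.card_range, nsmul_eq_mul, mul_add]
      rw [show (n:ℝ)⁻¹ * ((n:ℝ) * f x) = f x by field_simp]
    rw [h1, h2]; ring
  -- Step C : |∫ g - ∫ s| ≤ L/K + L * ∫ tail
  have hC : |(∫ u, g u ∂γ) - ∫ u, s u ∂γ|
      ≤ L * (K : ℝ)⁻¹ + L * ∫ u, RS.tail M u ∂γ := by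
    rw [← integral_sub hg_int hs_int]
    calc |∫ u, (g u - s u) ∂γ| ≤ ∫ u, |g u - s u| ∂γ := by
          simpa [Real.norm_eq_abs] using norm_integral_le_integral_norm (fun u => g u - s u) (μ := γ)
      _ ≤ ∫ u, (L * (K : ℝ)⁻¹ + L * RS.tail M u) ∂γ := by
          refine integral_mono (hg_int.sub hs_int).abs
            ((integrable_const _).add (htail_int.const_mul L)) ?_
          intro u; exact hpt u
      _ = L * (K : ℝ)⁻¹ + L * ∫ u, RS.tail M u ∂γ := by
          rw [integral_add (integrable_const _) (htail_int.const_mul L), integral_const,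
            integral_const_mul]
          simp
  -- Step D : empirical side
  have hD : |(n : ℝ)⁻¹ * ∑ i ∈ Finset.range n, g (a i)
        - (n : ℝ)⁻¹ * ∑ i ∈ Finset.range n, s (a i)|
      ≤ L * (K : ℝ)⁻¹ + L * ((n : ℝ)⁻¹ * ∑ i ∈ Finset.range n, RS.tail M (a i)) := by
    rw [← mul_sub, abs_mul, abs_of_nonneg (by positivity : (0:ℝ) ≤ (n:ℝ)⁻¹),
      ← Finset.sum_sub_distrib]
    calc (n:ℝ)⁻¹ * |∑ i ∈ Finset.range n, (g (a i) - s (a i))|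
        ≤ (n:ℝ)⁻¹ * ∑ i ∈ Finset.range n, |g (a i) - s (a i)| := by
          refine mul_le_mul_of_nonneg_left (Finset.abs_sum_le_sum_abs _ _) (by positivity)
      _ ≤ (n:ℝ)⁻¹ * ∑ i ∈ Finset.range n, (L * (K : ℝ)⁻¹ + L * RS.tail M (a i)) := by
          refine mul_le_mul_of_nonneg_left (Finset.sum_le_sum fun i _ => hpt (a i)) (by positivity)
      _ = L * (K : ℝ)⁻¹ + L * ((n : ℝ)⁻¹ * ∑ i ∈ Finset.range n, RS.tail M (a i)) := by
          rw [Finset.sum_add_distrib, Finset.sum_const, Finset.card_range, nsmul_eq_mul,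
            mul_add, ← Finset.mul_sum]
          field_simp
  -- Step E : expansion of s
  have hE1 : (n : ℝ)⁻¹ * ∑ i ∈ Finset.range n, s (a i)
      = ∑ j ∈ Finset.range m, gv j * ((n : ℝ)⁻¹ * ∑ i ∈ Finset.range n, RS.ind M K j (a i)) := by
    rw [hs]
    rw [show ∑ i ∈ Finset.range n, ∑ j ∈ Finset.range m, gv j * RS.ind M K j (a i)
      = ∑ j ∈ Finset.range m, ∑ i ∈ Finset.range n, gv j * RS.ind M K j (a i)
      from Finset.sum_comm, Finset.mul_sum]
    refine Finset.sum_congr rfl fun j _ => ?_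
    rw [← Finset.mul_sum]
    ring
  have hE2 : ∫ u, s u ∂γ = ∑ j ∈ Finset.range m, gv j * ∫ u, RS.ind M K j u ∂γ := by
    rw [hs, integral_finset_sum _ fun j _ => (hind_int j).const_mul _]
    exact Finset.sum_congr rfl fun j _ => integral_const_mul _ _
  -- Step F
  have hF : |(n : ℝ)⁻¹ * ∑ i ∈ Finset.range n, s (a i) - ∫ u, s u ∂γ|
      ≤ (L * M) * ∑ j ∈ Finset.range m,
          |(n : ℝ)⁻¹ * ∑ i ∈ Finset.range n, RS.ind M K j (a i) - ∫ u, RS.ind M K j u ∂γ| := by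
    rw [hE1, hE2, ← Finset.sum_sub_distrib]
    calc |∑ j ∈ Finset.range m, (gv j * ((n : ℝ)⁻¹ * ∑ i ∈ Finset.range n, RS.ind M K j (a i))
            - gv j * ∫ u, RS.ind M K j u ∂γ)|
        ≤ ∑ j ∈ Finset.range m, |gv j * ((n : ℝ)⁻¹ * ∑ i ∈ Finset.range n, RS.ind M K j (a i))
            - gv j * ∫ u, RS.ind M K j u ∂γ| := Finset.abs_sum_le_sum_abs _ _
      _ ≤ ∑ j ∈ Finset.range m, (L * M) *
            |(n : ℝ)⁻¹ * ∑ i ∈ Finset.range n, RS.ind M K j (a i) - ∫ u, RS.ind M K j u ∂γ| := by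
          refine Finset.sum_le_sum fun j hj => ?_
          rw [← mul_sub, abs_mul]
          exact mul_le_mul_of_nonneg_right (hgv_bd j hj) (abs_nonneg _)
      _ = (L * M) * ∑ j ∈ Finset.range m,
            |(n : ℝ)⁻¹ * ∑ i ∈ Finset.range n, RS.ind M K j (a i) - ∫ u, RS.ind M K j u ∂γ| :=
          (Finset.mul_sum _ _ _).symm
  -- combine
  rw [hA]
  have htri : |(∫ u, g u ∂γ) - (n : ℝ)⁻¹ * ∑ i ∈ Finset.range n, g (a i)|
      ≤ |(∫ u, g u ∂γ) - ∫ u, s u ∂γ|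
        + |(n : ℝ)⁻¹ * ∑ i ∈ Finset.range n, s (a i) - ∫ u, s u ∂γ|
        + |(n : ℝ)⁻¹ * ∑ i ∈ Finset.range n, g (a i)
            - (n : ℝ)⁻¹ * ∑ i ∈ Finset.range n, s (a i)| := by
    have := abs_sub_le ((∫ u, g u ∂γ)) (∫ u, s u ∂γ)
      ((n : ℝ)⁻¹ * ∑ i ∈ Finset.range n, g (a i))
    have h2 := abs_sub_le ((∫ u, s u ∂γ)) ((n : ℝ)⁻¹ * ∑ i ∈ Finset.range n, s (a i))
      ((n : ℝ)⁻¹ * ∑ i ∈ Finset.range n, g (a i))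
    have h3 := abs_sub_comm (∫ u, s u ∂γ) ((n : ℝ)⁻¹ * ∑ i ∈ Finset.range n, s (a i))
    have h4 := abs_sub_comm (∫ u, s u ∂γ) ((n : ℝ)⁻¹ * ∑ i ∈ Finset.range n, g (a i))
    have h5 := abs_sub_comm ((n : ℝ)⁻¹ * ∑ i ∈ Finset.range n, s (a i))
      ((n : ℝ)⁻¹ * ∑ i ∈ Finset.range n, g (a i))
    linarith
  linarith
/-- **Almost-sure uniform convergence of randomized smoothing to Gaussian convolution.**
For `L`-Lipschitz `f` and i.i.d. `N(0,σ²)` noises `δ₁, δ₂, …`, almost surely the averages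
`(1/n) Σ_{i<n} f(x + δᵢ)` converge uniformly in `x ∈ ℝ` to `∫ f(x+u) φ_σ(u) du`. -/
theorem randomized_smoothing_uniform_convergence
    {Ω : Type*} [MeasurableSpace Ω] (P : Measure Ω) [IsProbabilityMeasure P]
    (L σ : ℝ) (hL : 0 ≤ L) (hσ : 0 < σ)
    (f : ℝ → ℝ) (hf : ∀ x y, |f x - f y| ≤ L * |x - y|)
    (δ : ℕ → Ω → ℝ) (hmeas : ∀ i, Measurable (δ i))
    (hindep : iIndepFun δ P)
    (hgauss : ∀ i, Measure.map (δ i) P = gaussianReal 0 (Real.toNNReal (σ ^ 2))) :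
    ∀ᵐ ω ∂P, TendstoUniformly
      (fun (n : ℕ) (x : ℝ) => (1 / (n : ℝ)) * ∑ i ∈ Finset.range n, f (x + δ i ω))
      (fun x => ∫ u, f (x + u) * gaussianKernel σ u) Filter.atTop := by
  classical
  have hfc : Continuous f := by
    have hlip : LipschitzWith (Real.toNNReal L) f := by
      apply LipschitzWith.of_dist_le_mul
      intro a b
      rw [Real.dist_eq, Real.dist_eq, Real.coe_toNNReal L hL]
      exact hf a b
    exact hlip.continuous
  set γ := gaussianReal 0 (Real.toNNReal (σ ^ 2)) with hγ
  have hC : ∀ x : ℝ, (∫ u, f (x + u) * gaussianKernel σ u) = ∫ u, f (x + u) ∂γ := by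
    intro x
    rw [hγ, RS.integral_eq hσ (fun u => f (x + u))]
    congr 1
    ext u
    rw [RS.pdf_eq hσ, mul_comm]
  have E1 : ∀ᵐ ω ∂P, ∀ p : ℚ × ℚ,
      Tendsto (fun n : ℕ => (n : ℝ)⁻¹ * ∑ i ∈ Finset.range n,
          (Set.Ico ((p.1 : ℝ)) ((p.2 : ℝ))).indicator 1 (δ i ω)) atTop
        (𝓝 (∫ u, (Set.Ico ((p.1 : ℝ)) ((p.2 : ℝ))).indicator 1 u ∂γ)) := by
    rw [ae_all_iff]
    intro p
    exact RS.slln P δ hmeas hindep hgauss _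
      (measurable_const.indicator measurableSet_Ico)
      ((integrable_const (1 : ℝ)).indicator measurableSet_Ico)
  have E2 : ∀ᵐ ω ∂P, ∀ M : ℕ,
      Tendsto (fun n : ℕ => (n : ℝ)⁻¹ * ∑ i ∈ Finset.range n, RS.tail M (δ i ω)) atTop
        (𝓝 (∫ u, RS.tail M u ∂γ)) := by
    rw [ae_all_iff]
    intro M
    exact RS.slln P δ hmeas hindep hgauss _ (RS.tail_measurable M) (RS.tail_integrable hσ M)
  have htail0 : Tendsto (fun M : ℕ => ∫ u, RS.tail M u ∂γ) atTop (𝓝 0) := by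
    have h0 : (0 : ℝ) = ∫ (_ : ℝ), (0 : ℝ) ∂γ := by simp
    rw [h0]
    refine tendsto_integral_of_dominated_convergence (fun u => |u|)
      (fun M => (RS.tail_measurable M).aestronglyMeasurable) (RS.integrable_abs hσ)
      (fun M => Eventually.of_forall fun u => ?_) (Eventually.of_forall fun u => ?_)
    · rw [Real.norm_eq_abs, abs_of_nonneg (RS.tail_nonneg M u)]
      exact RS.tail_le_abs M u
    · refine tendsto_const_nhds.congr' ?_
      filter_upwards [eventually_ge_atTop (⌈|u|⌉₊ + 1)] with M hM
      have h1 : |u| < (M : ℝ) := by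
        calc |u| ≤ (⌈|u|⌉₊ : ℝ) := Nat.le_ceil _
          _ < (M : ℝ) := by exact_mod_cast Nat.lt_of_lt_of_le (Nat.lt_succ_self _) hM
      show (0:ℝ) = RS.tail M u
      unfold RS.tail
      rw [if_neg (not_le.mpr h1)]
  filter_upwards [E1, E2] with ω h1 h2
  rw [Metric.tendstoUniformly_iff]
  intro ε hε
  set ε₀ := ε / (8 * (L + 1)) with hε₀
  have hε₀pos : 0 < ε₀ := by rw [hε₀]; positivity
  obtain ⟨M, hMtail, hM1⟩ :=
    ((htail0.eventually_lt_const hε₀pos).and (eventually_ge_atTop 1)).exists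
  obtain ⟨K, hKgt⟩ := exists_nat_gt ((L + 1) / ε₀)
  have hK0 : (0 : ℝ) < (K : ℝ) := lt_trans (by positivity) hKgt
  have hK1 : 1 ≤ K := by exact_mod_cast Nat.one_le_iff_ne_zero.mpr (by
    intro h; rw [h] at hK0; simp at hK0)
  have hLK : L * (K : ℝ)⁻¹ < ε₀ := by
    have h1 : L + 1 < ε₀ * K := by
      rw [div_lt_iff₀ hε₀pos] at hKgt; linarith
    have h2 : (L + 1) * (K : ℝ)⁻¹ < ε₀ := by
      rw [← div_eq_mul_inv, div_lt_iff₀ hK0]; linarith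
    have h3 : L * (K : ℝ)⁻¹ ≤ (L + 1) * (K : ℝ)⁻¹ :=
      mul_le_mul_of_nonneg_right (by linarith) (by positivity)
    linarith
  set m := 2 * M * K with hm
  have hcells : Tendsto (fun n : ℕ => ∑ j ∈ Finset.range m,
      |(n : ℝ)⁻¹ * ∑ i ∈ Finset.range n, RS.ind M K j (δ i ω)
        - ∫ u, RS.ind M K j u ∂γ|) atTop (𝓝 0) := by
    have haj : ∀ j : ℕ, Tendsto (fun n : ℕ =>
        |(n : ℝ)⁻¹ * ∑ i ∈ Finset.range n, RS.ind M K j (δ i ω)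
          - ∫ u, RS.ind M K j u ∂γ|) atTop (𝓝 0) := by
      intro j
      have hj : Tendsto (fun n : ℕ => (n : ℝ)⁻¹ * ∑ i ∈ Finset.range n, RS.ind M K j (δ i ω))
          atTop (𝓝 (∫ u, RS.ind M K j u ∂γ)) := h1 (RS.q M K j, RS.q M K (j + 1))
      have := (hj.sub (tendsto_const_nhds (x := ∫ u, RS.ind M K j u ∂γ))).abs
      simpa using this
    have := tendsto_finset_sum (Finset.range m) (fun j _ => haj j)
    simpa using this
  have hLM1 : (0 : ℝ) < L * M + 1 := by positivity
  have hcells' : ∀ᶠ n : ℕ in atTop, ∑ j ∈ Finset.range m,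
      |(n : ℝ)⁻¹ * ∑ i ∈ Finset.range n, RS.ind M K j (δ i ω)
        - ∫ u, RS.ind M K j u ∂γ| < ε₀ / (L * M + 1) :=
    hcells.eventually_lt_const (by positivity)
  have htailn : ∀ᶠ n : ℕ in atTop,
      (n : ℝ)⁻¹ * ∑ i ∈ Finset.range n, RS.tail M (δ i ω) < 2 * ε₀ :=
    (h2 M).eventually_lt_const (by linarith)
  filter_upwards [hcells', htailn, eventually_ge_atTop 1] with n hc hb hn
  intro x
  rw [Real.dist_eq, hC x, one_div]
  have hest := RS.est L σ hL hσ f hf hfc M K hM1 hK1 (fun i => δ i ω) n hn x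
  have hTn : (0 : ℝ) ≤ (n : ℝ)⁻¹ * ∑ i ∈ Finset.range n, RS.tail M (δ i ω) := by
    refine mul_nonneg (by positivity) (Finset.sum_nonneg fun i _ => RS.tail_nonneg M _)
  have hS : (0 : ℝ) ≤ ∑ j ∈ Finset.range m,
      |(n : ℝ)⁻¹ * ∑ i ∈ Finset.range n, RS.ind M K j (δ i ω)
        - ∫ u, RS.ind M K j u ∂γ| := Finset.sum_nonneg fun j _ => abs_nonneg _
  have hb2 : L * ((n : ℝ)⁻¹ * ∑ i ∈ Finset.range n, RS.tail M (δ i ω)) ≤ L * (2 * ε₀) :=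
    mul_le_mul_of_nonneg_left (le_of_lt hb) hL
  have hb3 : L * (∫ u, RS.tail M u ∂γ) ≤ L * ε₀ :=
    mul_le_mul_of_nonneg_left (le_of_lt hMtail) hL
  have hb4 : (L * M) * ∑ j ∈ Finset.range m,
      |(n : ℝ)⁻¹ * ∑ i ∈ Finset.range n, RS.ind M K j (δ i ω)
        - ∫ u, RS.ind M K j u ∂γ| ≤ ε₀ := by
    have h5 : (L * M) * ∑ j ∈ Finset.range m,
        |(n : ℝ)⁻¹ * ∑ i ∈ Finset.range n, RS.ind M K j (δ i ω)
          - ∫ u, RS.ind M K j u ∂γ| ≤ (L * M) * (ε₀ / (L * M + 1)) :=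
      mul_le_mul_of_nonneg_left (le_of_lt hc) (by positivity)
    have h6 : (L * M) * (ε₀ / (L * M + 1)) ≤ ε₀ := by
      rw [div_eq_mul_inv, ← mul_assoc]
      have h7 : (L * M) * ε₀ ≤ (L * M + 1) * ε₀ := by nlinarith
      have h8 : (0:ℝ) < (L * M + 1)⁻¹ := by positivity
      calc (L * M) * ε₀ * (L * M + 1)⁻¹ ≤ (L * M + 1) * ε₀ * (L * M + 1)⁻¹ := by
            exact mul_le_mul_of_nonneg_right h7 (le_of_lt h8)
        _ = ε₀ := by field_simp
    linarith
  have heq : 8 * ε₀ + 8 * (L * ε₀) = ε := by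
    rw [hε₀]; field_simp; ring
  have hLe : 0 ≤ L * ε₀ := mul_nonneg hL (le_of_lt hε₀pos)
  calc |(∫ u, f (x + u) ∂γ) - (n : ℝ)⁻¹ * ∑ i ∈ Finset.range n, f (x + δ i ω)|
      ≤ 2 * (L * (K : ℝ)⁻¹)
        + L * ((n : ℝ)⁻¹ * ∑ i ∈ Finset.range n, RS.tail M (δ i ω))
        + L * (∫ u, RS.tail M u ∂γ)
        + (L * M) * ∑ j ∈ Finset.range m,
            |(n : ℝ)⁻¹ * ∑ i ∈ Finset.range n, RS.ind M K j (δ i ω)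
              - ∫ u, RS.ind M K j u ∂γ| := hest
    _ < ε := by
        have hltK : 2 * (L * (K : ℝ)⁻¹) < 2 * ε₀ := by linarith
        nlinarith [hb2, hb3, hb4, hLe, heq, hε₀pos]
end

section
/- Let σ > 0 and let f : ℝ → ℝ be bounded and measurable. Then v(φ_σ * f) ≤ v(f): the Gaussian-kernel convolution does not increase the number of sign variations of f. -/
/-- Number of sign changes in a list of reals (the list is assumed zero-free). -/
noncomputable def signChanges : List ℝ → ℕ
  | a :: b :: l => (if a * b < 0 then 1 else 0) + signChanges (b :: l)
  | _ => 0

open Classical in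
/-- The number of sign variations of `g : ℝ → ℝ`: the supremum, over all finite increasing
sequences `x₁ < ⋯ < xₙ`, of the number of sign changes in `(g x₁, …, g xₙ)` after deleting
all zero entries. -/
noncomputable def signVar (g : ℝ → ℝ) : ℕ∞ :=
  ⨆ l : {l : List ℝ // l.Pairwise (· < ·)},
    (signChanges (((l : List ℝ).map g).filter fun a => decide (a ≠ 0)) : ℕ∞)

open MeasureTheory Real Set Classical

/-- `g` has (at least) `m` sign alternations. -/
def Alt (g : ℝ → ℝ) (m : ℕ) : Prop :=
  ∃ l : List ℝ, l.Pairwise (· < ·) ∧ l.length = m + 1 ∧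
    l.IsChain (fun a b => g a * g b < 0)

lemma alt_one_iff {g : ℝ → ℝ} : Alt g 1 ↔ ∃ a b, a < b ∧ g a * g b < 0 := by
  constructor
  · rintro ⟨l, hs, hlen, hc⟩
    match l, hlen with
    | [a, b], _ =>
      exact ⟨a, b, by simpa using hs, by simpa using hc⟩
  · rintro ⟨a, b, hab, h⟩
    exact ⟨[a, b], by simpa using hab, rfl, by simpa using h⟩

lemma Alt.one {g : ℝ → ℝ} {m : ℕ} (h : Alt g (m + 1)) : Alt g 1 := by
  obtain ⟨l, hs, hlen, hc⟩ := h
  match l, hlen with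
  | a :: b :: l, _ =>
    refine alt_one_iff.2 ⟨a, b, ?_, ?_⟩
    · exact (List.pairwise_cons.1 hs).1 b (by simp)
    · exact (List.isChain_cons_cons.1 hc).1

/-- A nonempty list with all adjacent products negative has `signChanges = length - 1`. -/
lemma signChanges_of_chain : ∀ (l : List ℝ) (a : ℝ),
    (a :: l).IsChain (fun p q => p * q < 0) → signChanges (a :: l) + 1 = (a :: l).length
  | [], a, _ => by simp [signChanges]
  | b :: l, a, h => by
    obtain ⟨h1, h2⟩ := List.isChain_cons_cons.1 h
    have := signChanges_of_chain l b h2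
    simp only [signChanges, if_pos h1, List.length_cons] at *
    omega

/-- All entries of a chain-alternating list of length ≥ 2 are nonzero. -/
lemma ne_zero_of_chain : ∀ (l : List ℝ), l.IsChain (fun a b => a * b < 0) →
    2 ≤ l.length → ∀ a ∈ l, a ≠ 0 := by
  intro l
  induction l with
  | nil => intro _ h; simp at h
  | cons a l ih =>
    intro h hlen x hx
    rcases l with _ | ⟨b, l⟩
    · simp at hlen
    obtain ⟨h1, h2⟩ := List.isChain_cons_cons.1 h
    have ha : a ≠ 0 := by rintro rfl; simp at h1
    have hb : b ≠ 0 := by rintro rfl; simp at h1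
    rcases List.mem_cons.1 hx with rfl | hx
    · exact ha
    rcases l with _ | ⟨c, l⟩
    · rcases List.mem_cons.1 hx with rfl | hx
      · exact hb
      · simp at hx
    · exact ih h2 (by simp) x hx

/-- From a zero-free list, extract an alternating sublist with the same head realizing
all the sign changes. -/
lemma exists_alt_sublist : ∀ (l : List ℝ) (a : ℝ), (∀ x ∈ a :: l, x ≠ 0) →
    ∃ l', l'.Sublist l ∧ (a :: l').IsChain (fun p q => p * q < 0) ∧
      (a :: l').length = signChanges (a :: l) + 1
  | [], a, _ => ⟨[], by simp, by simp, by simp [signChanges]⟩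
  | b :: m, a, h0 => by
    obtain ⟨l'', hsub, hchain, hlen⟩ :=
      exists_alt_sublist m b (fun x hx => h0 x (List.mem_cons_of_mem a hx))
    by_cases hab : a * b < 0
    · refine ⟨b :: l'', (hsub.cons₂ b), List.isChain_cons_cons.2 ⟨hab, hchain⟩, ?_⟩
      simp only [signChanges, if_pos hab, List.length_cons] at *
      omega
    · have ha : a ≠ 0 := h0 a (by simp)
      have hb : b ≠ 0 := h0 b (by simp)
      have hab' : 0 < a * b := lt_of_le_of_ne (not_lt.1 hab) (by
        intro h; rcases mul_eq_zero.1 h.symm with h | h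
        exacts [ha h, hb h])
      refine ⟨l'', hsub.trans (List.sublist_cons_self b m), ?_, ?_⟩
      · rcases l'' with _ | ⟨c, l''⟩
        · simp
        · obtain ⟨hbc, hcc⟩ := List.isChain_cons_cons.1 hchain
          refine List.isChain_cons_cons.2 ⟨?_, hcc⟩
          nlinarith [sq_nonneg b]
      · simp only [signChanges, if_neg hab, List.length_cons] at *
        omega

/-- If the filtered mapped list over a sorted list has `m ≥ 1` sign changes, then `Alt g m`. -/
lemma alt_of_signChanges {g : ℝ → ℝ} {l : List ℝ} (hl : l.Pairwise (· < ·)) {m : ℕ}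
    (hm : signChanges ((l.map g).filter fun a => decide (a ≠ 0)) = m) (hm1 : 1 ≤ m) :
    Alt g m := by
  set r := (l.map g).filter (fun a => decide (a ≠ 0)) with hr
  have hzf : ∀ x ∈ r, x ≠ 0 := by
    intro x hx
    have := List.of_mem_filter hx
    simpa using this
  rcases hre : r with _ | ⟨a, r'⟩
  · rw [hre] at hm; simp [signChanges] at hm; omega
  obtain ⟨l', hsub, hchain, hlen⟩ := exists_alt_sublist r' a (hre ▸ hzf)
  have hsub2 : (a :: l').Sublist (l.map g) := by
    have h1 : (a :: l').Sublist r := hre ▸ (hsub.cons₂ a)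
    exact h1.trans (List.filter_sublist)
  obtain ⟨l₀, hl₀sub, hl₀⟩ := List.sublist_map_iff.1 hsub2
  refine ⟨l₀, hl.sublist hl₀sub, ?_, ?_⟩
  · have h2 : l₀.length = (a :: l').length := by rw [hl₀]; simp
    rw [hre] at hm
    omega
  · have := hl₀ ▸ hchain
    exact (List.isChain_map g).1 this

/-- `Alt f m` gives a lower bound on `signVar`. -/
lemma le_signVar_of_alt {f : ℝ → ℝ} {m : ℕ} (hm : 1 ≤ m) (h : Alt f m) :
    (m : ℕ∞) ≤ signVar f := by
  classical
  obtain ⟨l, hs, hlen, hc⟩ := h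
  have hcm : (l.map f).IsChain (fun p q => p * q < 0) := (List.isChain_map f).2 hc
  have hne : ∀ x ∈ l.map f, x ≠ 0 :=
    ne_zero_of_chain _ hcm (by simp [hlen]; omega)
  have hfilt : (l.map f).filter (fun a => decide (a ≠ 0)) = l.map f := by
    apply List.filter_eq_self.2
    intro x hx; simpa using hne x hx
  rcases hml : l.map f with _ | ⟨a, r⟩
  · exfalso; have := congrArg List.length hml; simp [hlen] at this
  have hsc : signChanges (l.map f) = m := by
    have := signChanges_of_chain r a (hml ▸ hcm)
    have hlen2 : (a :: r).length = m + 1 := by rw [← hml]; simp [hlen]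
    rw [hml]; omega
  have : signVar f ≥ (signChanges ((l.map f).filter fun a => decide (a ≠ 0)) : ℕ∞) :=
    le_iSup (fun l : {l : List ℝ // l.Pairwise (· < ·)} =>
      (signChanges (((l : List ℝ).map f).filter fun a => decide (a ≠ 0)) : ℕ∞)) ⟨l, hs⟩
  rw [hfilt, hsc] at this
  exact this


/-- If both signs of `w` occur below every point, then `w` alternates arbitrarily often. -/
lemma alt_of_unbounded {w : ℝ → ℝ}
    (H : ∀ x : ℝ, (∃ y, y < x ∧ 0 < w y) ∧ (∃ y, y < x ∧ w y < 0)) (m : ℕ) :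
    Alt w m := by
  classical
  let p : ℕ → ℝ := fun n => Nat.rec (Classical.choose (H 0).1)
    (fun _ q => if 0 < w q then Classical.choose (H q).2 else Classical.choose (H q).1) n
  have hp0 : 0 < w (p 0) := (Classical.choose_spec (H 0).1).2
  have hstep : ∀ n, w (p n) ≠ 0 →
      p (n + 1) < p n ∧ w (p n) * w (p (n + 1)) < 0 := by
    intro n hne
    by_cases hpos : 0 < w (p n)
    · have : p (n+1) = Classical.choose (H (p n)).2 := by simp only [p, hpos, if_pos]
      have hspec := Classical.choose_spec (H (p n)).2
      rw [this]
      exact ⟨hspec.1, mul_neg_of_pos_of_neg hpos hspec.2⟩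
    · have hneg : w (p n) < 0 := lt_of_le_of_ne (not_lt.1 hpos) hne
      have : p (n+1) = Classical.choose (H (p n)).1 := by simp only [p, hpos, if_neg, ite_false]
      have hspec := Classical.choose_spec (H (p n)).1
      rw [this]
      exact ⟨hspec.1, mul_neg_of_neg_of_pos hneg hspec.2⟩
  have hne : ∀ n, w (p n) ≠ 0 := by
    intro n
    induction n with
    | zero => exact ne_of_gt hp0
    | succ n ih =>
      have := (hstep n ih).2
      intro h; rw [h] at this; simp at this
  have hlt : ∀ n, p (n + 1) < p n := fun n => (hstep n (hne n)).1
  have halt : ∀ n, w (p n) * w (p (n + 1)) < 0 := fun n => (hstep n (hne n)).2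
  have hanti : StrictAnti p := strictAnti_nat_of_succ_lt hlt
  -- build the list
  have key : ∀ m : ℕ, ∃ l : List ℝ, l.length = m + 1 ∧ l.Pairwise (· < ·) ∧
      l.IsChain (fun a b => w a * w b < 0) ∧ (∀ u ∈ l, ∃ i, i ≤ m ∧ u = p i) ∧
      l.head? = some (p m) := by
    intro m
    induction m with
    | zero => exact ⟨[p 0], by simp, by simp, by simp, by simp, by simp⟩
    | succ m ih =>
      obtain ⟨l, hlen, hsort, hchain, hmem, hhead⟩ := ih
      refine ⟨p (m + 1) :: l, by simp [hlen], ?_, ?_, ?_, by simp⟩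
      · refine List.pairwise_cons.2 ⟨?_, hsort⟩
        intro b hb
        obtain ⟨i, hi, rfl⟩ := hmem b hb
        exact hanti (Nat.lt_succ_of_le hi)
      · refine List.isChain_cons.2 ⟨?_, hchain⟩
        intro y hy
        rw [hhead] at hy
        simp only [Option.mem_def, Option.some_inj] at hy
        subst hy
        have := halt m
        nlinarith
      · intro u hu
        rcases List.mem_cons.1 hu with rfl | hu
        · exact ⟨m + 1, le_refl _, rfl⟩
        · obtain ⟨i, hi, rfl⟩ := hmem u hu
          exact ⟨i, by omega, rfl⟩
  obtain ⟨l, hlen, hsort, hchain, _, _⟩ := key m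
  exact ⟨l, hsort, hlen, hchain⟩


lemma chain'_imp_mem {α : Type*} {R S : α → α → Prop} :
    ∀ l : List α, (∀ a ∈ l, ∀ b ∈ l, R a b → S a b) → l.IsChain R → l.IsChain S := by
  intro l
  induction l with
  | nil => intro _ _; simp
  | cons a l ih =>
    intro h hc
    rcases l with _ | ⟨b, l⟩
    · simp
    obtain ⟨h1, h2⟩ := List.isChain_cons_cons.1 hc
    refine List.isChain_cons_cons.2 ⟨h a (by simp) b (by simp) h1, ?_⟩
    exact ih (fun x hx y hy => h x (List.mem_cons_of_mem a hx) y (List.mem_cons_of_mem a hy)) h2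

/-- Core step: if `w` is nonnegative below `t`, takes both signs below every `x > t`, and has
at most `k + 1` sign changes, then `y ↦ (y - t) * w y` has at most `k` sign changes. -/
lemma claim_step {w : ℝ → ℝ} {t : ℝ} {k : ℕ}
    (hc : ∀ y, y < t → 0 ≤ w y)
    (hb : ∀ x, t < x → (∃ y, y < x ∧ 0 < w y) ∧ (∃ y, y < x ∧ w y < 0))
    (h : ¬ Alt w (k + 2)) :
    ¬ Alt (fun y => (y - t) * w y) (k + 1) := by
  rintro ⟨l, hsort, hlen, hchain⟩
  set W : ℝ → ℝ := fun y => (y - t) * w y with hW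
  rcases l with _ | ⟨z0, l⟩; · simp at hlen
  rcases l with _ | ⟨z1, rest⟩; · simp at hlen
  obtain ⟨hW01, hchain1⟩ := List.isChain_cons_cons.1 hchain
  have hWz0 : W z0 ≠ 0 := by intro hz; rw [hz] at hW01; simp at hW01
  have hWz1 : W z1 ≠ 0 := by intro hz; rw [hz] at hW01; simp at hW01
  have hz0t : z0 ≠ t := by
    intro hz; apply hWz0; simp [hW, hz]
  have hwz0 : w z0 ≠ 0 := by
    intro hz; apply hWz0; simp [hW, hz]
  rcases lt_or_gt_of_ne hz0t with hz0lt | hz0gt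
  · -- Case B : z0 < t
    have hwz0pos : 0 < w z0 := lt_of_le_of_ne (hc z0 hz0lt) (Ne.symm hwz0)
    have hz1t : t < z1 := by
      rcases lt_trichotomy z1 t with h1 | h1 | h1
      · exfalso
        have hwz1pos : 0 < w z1 := by
          rcases (hc z1 h1).lt_or_eq with h2 | h2
          · exact h2
          · exfalso; apply hWz1; simp [hW, ← h2]
        have : 0 < W z0 * W z1 := by
          have : W z0 < 0 := mul_neg_of_neg_of_pos (by linarith) hwz0pos
          have h3 : W z1 < 0 := mul_neg_of_neg_of_pos (by linarith) hwz1pos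
          exact mul_pos_of_neg_of_neg this h3
        linarith
      · exfalso; apply hWz1; simp [hW, h1]
      · exact h1
    have hwz1pos : 0 < w z1 := by
      have hWz0neg : W z0 < 0 := mul_neg_of_neg_of_pos (by linarith) hwz0pos
      have hWz1pos : 0 < W z1 := by
        by_contra hle
        push_neg at hle
        nlinarith [mul_nonneg (neg_nonneg.2 hWz0neg.le) (neg_nonneg.2 hle)]
      by_contra hle
      push_neg at hle
      simp only [hW] at hWz1pos
      nlinarith [mul_nonneg (sub_pos.2 hz1t).le (neg_nonneg.2 hle)]
    obtain ⟨y, hy1, hy2⟩ := (hb z1 hz1t).2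
    have hyt : t ≤ y := by
      by_contra hyt
      exact absurd (hc y (not_le.1 hyt)) (not_le.2 hy2)
    have hz0y : z0 < y := lt_of_lt_of_le hz0lt hyt
    -- all of z1 :: rest is above t, so W-chain gives w-chain there
    have hsort1 : (z1 :: rest).Pairwise (· < ·) := (List.pairwise_cons.1 hsort).2
    have hallgt : ∀ u ∈ z1 :: rest, t < u := by
      intro u hu
      rcases List.mem_cons.1 hu with rfl | hu
      · exact hz1t
      · exact lt_trans hz1t ((List.pairwise_cons.1 hsort1).1 u hu)
    have hwchain : (z1 :: rest).IsChain (fun a b => w a * w b < 0) := by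
      refine chain'_imp_mem _ ?_ hchain1
      intro a ha b hb' hab
      have h1 : 0 < a - t := sub_pos.2 (hallgt a ha)
      have h2 : 0 < b - t := sub_pos.2 (hallgt b hb')
      simp only [hW] at hab
      by_contra hge
      push_neg at hge
      nlinarith [mul_nonneg (mul_pos h1 h2).le hge]
    -- the new list z0 :: y :: z1 :: rest
    apply h
    refine ⟨z0 :: y :: z1 :: rest, ?_, by simp at hlen ⊢; omega, ?_⟩
    · refine List.pairwise_cons.2 ⟨?_, List.pairwise_cons.2 ⟨?_, hsort1⟩⟩
      · intro b hb'
        rcases List.mem_cons.1 hb' with rfl | hb'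
        · exact hz0y
        · exact lt_trans hz0lt (lt_of_le_of_lt hyt (by
            rcases List.mem_cons.1 hb' with rfl | hb'
            · exact hy1
            · exact lt_trans hy1 ((List.pairwise_cons.1 hsort1).1 b hb')))
      · intro b hb'
        rcases List.mem_cons.1 hb' with rfl | hb'
        · exact hy1
        · exact lt_trans hy1 ((List.pairwise_cons.1 hsort1).1 b hb')
    · refine List.isChain_cons_cons.2 ⟨mul_neg_of_pos_of_neg hwz0pos hy2, ?_⟩
      exact List.isChain_cons_cons.2 ⟨mul_neg_of_neg_of_pos hy2 hwz1pos, hwchain⟩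
  · -- Case A : t < z0 : everything is above t
    have hsort1 : (z1 :: rest).Pairwise (· < ·) := (List.pairwise_cons.1 hsort).2
    have hallgt : ∀ u ∈ z0 :: z1 :: rest, t < u := by
      intro u hu
      rcases List.mem_cons.1 hu with rfl | hu
      · exact hz0gt
      · exact lt_trans hz0gt ((List.pairwise_cons.1 hsort).1 u hu)
    have hwchain : (z0 :: z1 :: rest).IsChain (fun a b => w a * w b < 0) := by
      refine chain'_imp_mem _ ?_ hchain
      intro a ha b hb' hab
      have h1 : 0 < a - t := sub_pos.2 (hallgt a ha)
      have h2 : 0 < b - t := sub_pos.2 (hallgt b hb')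
      simp only [hW] at hab
      by_contra hge
      push_neg at hge
      nlinarith [mul_nonneg (mul_pos h1 h2).le hge]
    -- pick a point below z0 of opposite sign
    obtain ⟨⟨yp, hyp1, hyp2⟩, ⟨yn, hyn1, hyn2⟩⟩ := hb z0 hz0gt
    have hq : ∃ q, q < z0 ∧ w q * w z0 < 0 := by
      rcases lt_or_gt_of_ne hwz0 with hneg | hpos
      · exact ⟨yp, hyp1, mul_neg_of_pos_of_neg hyp2 hneg⟩
      · exact ⟨yn, hyn1, mul_neg_of_neg_of_pos hyn2 hpos⟩
    obtain ⟨q, hq1, hq2⟩ := hq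
    apply h
    refine ⟨q :: z0 :: z1 :: rest, ?_, by simp at hlen ⊢; omega, List.isChain_cons_cons.2 ⟨hq2, hwchain⟩⟩
    refine List.pairwise_cons.2 ⟨?_, hsort⟩
    intro b hb'
    rcases List.mem_cons.1 hb' with rfl | hb'
    · exact hq1
    · exact lt_trans hq1 ((List.pairwise_cons.1 hsort).1 b hb')


/-- Transfer of alternations along a strictly monotone reparametrization and a positive factor:
if `g x = c x * h (φ x)` with `c > 0`, then alternations of `g` give alternations of `h`. -/
lemma Alt.comp {g h c : ℝ → ℝ} {φ : ℝ → ℝ} (hφ : StrictMono φ) (hcpos : ∀ x, 0 < c x)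
    (heq : ∀ x, g x = c x * h (φ x)) {m : ℕ} (ha : Alt g m) : Alt h m := by
  obtain ⟨l, hsort, hlen, hchain⟩ := ha
  refine ⟨l.map φ, ?_, by simp [hlen], ?_⟩
  · exact List.Pairwise.map φ (fun a b hab => hφ hab) hsort
  · rw [List.isChain_map]
    refine List.IsChain.imp ?_ hchain
    intro a b hab
    rw [heq a, heq b] at hab
    by_contra hge
    push_neg at hge
    nlinarith [mul_pos (hcpos a) (hcpos b), mul_nonneg (mul_pos (hcpos a) (hcpos b)).le hge]

/-- Mean value theorem along a list: an alternating list for `M` yields a one-shorter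
alternating list for its derivative `D`. -/
lemma mvt_aux {M D : ℝ → ℝ} (hd : ∀ x, HasDerivAt M (D x) x) :
    ∀ (rest : List ℝ) (a b : ℝ), (a :: b :: rest).Pairwise (· < ·) →
      (a :: b :: rest).IsChain (fun p q => M p * M q < 0) →
      ∃ (ξ : ℝ) (tl : List ℝ), a < ξ ∧ ξ < b ∧ 0 < D ξ * M b ∧
        (ξ :: tl).length = (b :: rest).length ∧ (ξ :: tl).Pairwise (· < ·) ∧
        (ξ :: tl).IsChain (fun p q => D p * D q < 0) ∧ ∀ u ∈ tl, b < u := by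
  intro rest
  induction rest with
  | nil =>
    intro a b hsort hchain
    have hab : a < b := by simpa using hsort
    have hM : M a * M b < 0 := by simpa using hchain
    obtain ⟨ξ, hξ, hslope⟩ := exists_hasDerivAt_eq_slope M D hab
      (fun x _ => (hd x).continuousAt.continuousWithinAt) (fun x _ => hd x)
    refine ⟨ξ, [], hξ.1, hξ.2, ?_, rfl, by simp, by simp, by simp⟩
    rw [hslope]
    have h1 : 0 < (M b - M a) * M b := by nlinarith [sq_nonneg (M b)]
    have h2 : 0 < b - a := by linarith
    rw [div_mul_eq_mul_div]
    exact div_pos h1 h2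
  | cons c rest ih =>
    intro a b hsort hchain
    have hab : a < b := (List.pairwise_cons.1 hsort).1 b (by simp)
    have hsort1 : (b :: c :: rest).Pairwise (· < ·) := (List.pairwise_cons.1 hsort).2
    have hchain1 : (b :: c :: rest).IsChain (fun p q => M p * M q < 0) :=
      (List.isChain_cons_cons.1 hchain).2
    have hMab : M a * M b < 0 := (List.isChain_cons_cons.1 hchain).1
    have hMbc : M b * M c < 0 := (List.isChain_cons_cons.1 hchain1).1
    obtain ⟨ξ, hξab, hslope⟩ := exists_hasDerivAt_eq_slope M D hab
      (fun x _ => (hd x).continuousAt.continuousWithinAt) (fun x _ => hd x)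
    have hDξ : 0 < D ξ * M b := by
      rw [hslope]
      have h1 : 0 < (M b - M a) * M b := by nlinarith [sq_nonneg (M b)]
      have h2 : 0 < b - a := by linarith
      rw [div_mul_eq_mul_div]
      exact div_pos h1 h2
    obtain ⟨ξ', tl', hbξ', hξ'c, hDξ', hlen', hsort', hchain', hmem'⟩ := ih b c hsort1 hchain1
    refine ⟨ξ, ξ' :: tl', hξab.1, hξab.2, hDξ, by simpa using hlen', ?_, ?_, ?_⟩
    · refine List.pairwise_cons.2 ⟨?_, hsort'⟩
      intro u hu
      rcases List.mem_cons.1 hu with rfl | hu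
      · exact lt_trans hξab.2 hbξ'
      · exact lt_trans hξab.2 (lt_trans ((List.pairwise_cons.1 hsort1).1 c (by simp)) (hmem' u hu))
    · refine List.isChain_cons_cons.2 ⟨?_, hchain'⟩
      by_contra hge
      push_neg at hge
      nlinarith [mul_pos hDξ hDξ']
    · intro u hu
      rcases List.mem_cons.1 hu with rfl | hu
      · exact hbξ'
      · exact lt_trans ((List.pairwise_cons.1 hsort1).1 c (by simp)) (hmem' u hu)

/-- If `M` everywhere differentiable with derivative `D`, alternations of `M` pass to `D`. -/
lemma Alt.deriv {M D : ℝ → ℝ} (hd : ∀ x, HasDerivAt M (D x) x) {m : ℕ}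
    (h : Alt M (m + 1)) : Alt D m := by
  obtain ⟨l, hsort, hlen, hchain⟩ := h
  rcases l with _ | ⟨a, l⟩; · simp at hlen
  rcases l with _ | ⟨b, rest⟩; · simp at hlen
  obtain ⟨ξ, tl, _, _, _, hlen', hsort', hchain', _⟩ := mvt_aux hd rest a b hsort hchain
  refine ⟨ξ :: tl, hsort', ?_, hchain'⟩
  simp at hlen hlen' ⊢
  omega


/-- B: a function with no sign alternation is sign-definite. -/
lemma signdef_of_not_alt_one {w : ℝ → ℝ} (h : ¬ Alt w 1) :
    (∀ y, 0 ≤ w y) ∨ (∀ y, w y ≤ 0) := by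
  by_contra hcon
  push_neg at hcon
  obtain ⟨⟨y1, hy1⟩, ⟨y2, hy2⟩⟩ := hcon
  apply h
  rcases lt_trichotomy y1 y2 with hlt | heq | hgt
  · exact alt_one_iff.2 ⟨y1, y2, hlt, mul_neg_of_neg_of_pos hy1 hy2⟩
  · rw [heq] at hy1; linarith
  · exact alt_one_iff.2 ⟨y2, y1, hgt, mul_neg_of_pos_of_neg hy2 hy1⟩

/-- A: the Laplace transform of a sign-definite function has no alternation. -/
lemma not_alt_laplace_of_signdef {w : ℝ → ℝ}
    (hsd : (∀ y, 0 ≤ w y) ∨ (∀ y, w y ≤ 0)) :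
    ¬ Alt (fun x => ∫ y, Real.exp (x * y) * w y) 1 := by
  intro h
  obtain ⟨a, b, hab, hprod⟩ := alt_one_iff.1 h
  rcases hsd with hsd | hsd
  · have h1 : ∀ x : ℝ, 0 ≤ ∫ y, Real.exp (x * y) * w y := fun x =>
      integral_nonneg (fun y => mul_nonneg (Real.exp_pos _).le (hsd y))
    exact absurd (mul_nonneg (h1 a) (h1 b)) (not_le.2 hprod)
  · have h1 : ∀ x : ℝ, (∫ y, Real.exp (x * y) * w y) ≤ 0 := fun x =>
      integral_nonpos (fun y => mul_nonpos_of_nonneg_of_nonpos (Real.exp_pos _).le (hsd y))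
    nlinarith [h1 a, h1 b]

lemma abs_le_exp_abs (r : ℝ) : |r| ≤ Real.exp |r| := by
  nlinarith [Real.add_one_le_exp |r|, abs_nonneg r]

/-- integrability of exponential-weighted `|v|`. -/
lemma integrable_exp_abs {v : ℝ → ℝ}
    (hI : ∀ x : ℝ, Integrable (fun y => Real.exp (x * y) * v y)) (c : ℝ) :
    Integrable (fun y => Real.exp (c * y) * |v y|) := by
  simpa [abs_mul, abs_of_pos (Real.exp_pos _)] using (hI c).abs

/-- C: integrability is preserved by multiplying with `(y - t)`. -/
lemma integrable_mul_sub {v : ℝ → ℝ} (hv : Measurable v)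
    (hI : ∀ x : ℝ, Integrable (fun y => Real.exp (x * y) * v y)) (t x : ℝ) :
    Integrable (fun y => Real.exp (x * y) * ((y - t) * v y)) := by
  refine Integrable.mono'
    (g := fun y => Real.exp |t| *
      (Real.exp ((x + 1) * y) * |v y| + Real.exp ((x - 1) * y) * |v y|)) ?_ ?_ ?_
  · exact ((integrable_exp_abs hI (x+1)).add (integrable_exp_abs hI (x-1))).const_mul _
  · exact Measurable.aestronglyMeasurable
      (((measurable_id.const_mul x).exp).mul ((measurable_id.sub measurable_const).mul hv))
  · refine Filter.Eventually.of_forall (fun y => ?_)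
    have key : Real.exp (x * y) * |y - t| ≤
        Real.exp |t| * (Real.exp ((x + 1) * y) + Real.exp ((x - 1) * y)) := by
      have h1 : |y - t| ≤ Real.exp |t| * (Real.exp y + Real.exp (-y)) := by
        calc |y - t| ≤ Real.exp |y - t| := abs_le_exp_abs _
          _ ≤ Real.exp (|y| + |t|) := by
              apply Real.exp_le_exp.2
              rw [sub_eq_add_neg]
              exact (abs_add_le y (-t)).trans (by simp)
          _ = Real.exp |t| * Real.exp |y| := by rw [Real.exp_add]; ring
          _ ≤ Real.exp |t| * (Real.exp y + Real.exp (-y)) :=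
              mul_le_mul_of_nonneg_left (Real.exp_abs_le y) (Real.exp_pos _).le
      calc Real.exp (x * y) * |y - t|
          ≤ Real.exp (x * y) * (Real.exp |t| * (Real.exp y + Real.exp (-y))) :=
            mul_le_mul_of_nonneg_left h1 (Real.exp_pos _).le
        _ = Real.exp |t| * (Real.exp ((x + 1) * y) + Real.exp ((x - 1) * y)) := by
            have e1 : (x + 1) * y = x * y + y := by ring
            have e2 : (x - 1) * y = x * y + -y := by ring
            rw [e1, e2, Real.exp_add, Real.exp_add]
            ring
    have : ‖Real.exp (x * y) * ((y - t) * v y)‖ =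
        Real.exp (x * y) * |y - t| * |v y| := by
      rw [Real.norm_eq_abs, abs_mul, abs_mul, abs_of_pos (Real.exp_pos _), mul_assoc]
    rw [this]
    calc Real.exp (x * y) * |y - t| * |v y|
        ≤ Real.exp |t| * (Real.exp ((x + 1) * y) + Real.exp ((x - 1) * y)) * |v y| :=
          mul_le_mul_of_nonneg_right key (abs_nonneg _)
      _ = Real.exp |t| * (Real.exp ((x + 1) * y) * |v y| + Real.exp ((x - 1) * y) * |v y|) := by
          ring

/-- D: differentiation under the integral sign for the two-sided Laplace transform. -/
lemma hasDerivAt_laplace {v : ℝ → ℝ} (hv : Measurable v)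
    (hI : ∀ x : ℝ, Integrable (fun y => Real.exp (x * y) * v y)) (t x : ℝ) :
    HasDerivAt (fun x' => ∫ y, Real.exp (x' * (y - t)) * v y)
      (∫ y, (y - t) * Real.exp (x * (y - t)) * v y) x := by
  set c : ℝ := |x| + 2 with hc
  have hc0 : 0 ≤ c := by positivity
  have key := hasDerivAt_integral_of_dominated_loc_of_deriv_le
    (F := fun x' y => Real.exp (x' * (y - t)) * v y)
    (F' := fun x' y => (y - t) * Real.exp (x' * (y - t)) * v y)
    (x₀ := x) (s := Metric.ball x 1) (μ := volume)
    (bound := fun y => Real.exp (c * |t|) * (Real.exp (c * y) + Real.exp (-c * y)) * |v y|)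
    (Metric.ball_mem_nhds x one_pos)
    (Filter.Eventually.of_forall fun x' =>
      Measurable.aestronglyMeasurable
        ((((measurable_id.sub measurable_const).const_mul x').exp).mul hv))
    (by
      have : (fun y => Real.exp (x * (y - t)) * v y) =
          (fun y => Real.exp (-(x * t)) * (Real.exp (x * y) * v y)) := by
        funext y
        rw [← mul_assoc, ← Real.exp_add]
        ring_nf
      show Integrable (fun y => Real.exp (x * (y - t)) * v y) volume
      rw [this]
      exact (hI x).const_mul _)
    (Measurable.aestronglyMeasurable
      (((measurable_id.sub measurable_const).mul
        (((measurable_id.sub measurable_const).const_mul x).exp)).mul hv))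
    (Filter.Eventually.of_forall fun y => by
      intro x' hx'
      show ‖(y - t) * Real.exp (x' * (y - t)) * v y‖ ≤ _
      have hx'abs : |x'| ≤ |x| + 1 := by
        have : |x' - x| < 1 := by simpa [Real.dist_eq] using Metric.mem_ball.1 hx'
        calc |x'| = |x + (x' - x)| := by ring_nf
          _ ≤ |x| + |x' - x| := abs_add_le _ _
          _ ≤ |x| + 1 := by linarith
      have hnorm : ‖(y - t) * Real.exp (x' * (y - t)) * v y‖ =
          |y - t| * Real.exp (x' * (y - t)) * |v y| := by
        rw [Real.norm_eq_abs, abs_mul, abs_mul, abs_of_pos (Real.exp_pos _)]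
      rw [hnorm]
      have key2 : |y - t| * Real.exp (x' * (y - t)) ≤
          Real.exp (c * |t|) * (Real.exp (c * y) + Real.exp (-c * y)) := by
        have s1 : |y - t| ≤ Real.exp |y - t| := abs_le_exp_abs _
        have s2 : Real.exp (x' * (y - t)) ≤ Real.exp ((|x| + 1) * |y - t|) := by
          apply Real.exp_le_exp.2
          calc x' * (y - t) ≤ |x' * (y - t)| := le_abs_self _
            _ = |x'| * |y - t| := abs_mul _ _
            _ ≤ (|x| + 1) * |y - t| := mul_le_mul_of_nonneg_right hx'abs (abs_nonneg _)
        have s3 : |y - t| * Real.exp (x' * (y - t)) ≤ Real.exp (c * |y - t|) := by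
          calc |y - t| * Real.exp (x' * (y - t))
              ≤ Real.exp |y - t| * Real.exp ((|x| + 1) * |y - t|) :=
                mul_le_mul s1 s2 (Real.exp_pos _).le (Real.exp_pos _).le
            _ = Real.exp (c * |y - t|) := by
                rw [← Real.exp_add]; congr 1; rw [hc]; ring
        refine s3.trans ?_
        calc Real.exp (c * |y - t|) ≤ Real.exp (c * (|y| + |t|)) := by
              apply Real.exp_le_exp.2
              apply mul_le_mul_of_nonneg_left ?_ hc0
              rw [sub_eq_add_neg]
              exact (abs_add_le y (-t)).trans (by simp)
          _ = Real.exp (c * |t|) * Real.exp (c * |y|) := by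
              rw [← Real.exp_add]; congr 1; ring
          _ ≤ Real.exp (c * |t|) * (Real.exp (c * y) + Real.exp (-c * y)) := by
              apply mul_le_mul_of_nonneg_left ?_ (Real.exp_pos _).le
              rcases le_or_gt 0 y with h | h
              · rw [abs_of_nonneg h]; nlinarith [Real.exp_pos (-c * y)]
              · rw [abs_of_neg h]
                have : c * -y = -c * y := by ring
                rw [this]; nlinarith [Real.exp_pos (c * y)]
      calc |y - t| * Real.exp (x' * (y - t)) * |v y|
          ≤ Real.exp (c * |t|) * (Real.exp (c * y) + Real.exp (-c * y)) * |v y| :=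
            mul_le_mul_of_nonneg_right key2 (abs_nonneg _)
        _ = _ := rfl)
    (by
      have i1 : Integrable (fun y => Real.exp (c * y) * |v y|) := integrable_exp_abs hI c
      have i2 : Integrable (fun y => Real.exp (-c * y) * |v y|) := integrable_exp_abs hI (-c)
      have : (fun y => Real.exp (c * |t|) * (Real.exp (c * y) + Real.exp (-c * y)) * |v y|) =
          (fun y => Real.exp (c * |t|) *
            (Real.exp (c * y) * |v y| + Real.exp (-c * y) * |v y|)) := by
        funext y; ring
      rw [this]
      exact (i1.add i2).const_mul _)
    (Filter.Eventually.of_forall fun y => by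
      intro x' _
      show HasDerivAt (fun x' => Real.exp (x' * (y - t)) * v y)
        ((y - t) * Real.exp (x' * (y - t)) * v y) x'
      have h1 : HasDerivAt (fun x' : ℝ => x' * (y - t)) (y - t) x' :=
        hasDerivAt_mul_const (y - t)
      have h2 : HasDerivAt (fun x' : ℝ => Real.exp (x' * (y - t)))
          (Real.exp (x' * (y - t)) * (y - t)) x' := h1.exp
      have h3 := h2.mul_const (v y)
      exact h3.congr_deriv (by ring))
  exact key.2

lemma alt_smul_iff {w : ℝ → ℝ} {s : ℝ} (hss : s * s = 1) {m : ℕ} :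
    Alt (fun y => s * w y) m ↔ Alt w m := by
  constructor
  · rintro ⟨l, h1, h2, h3⟩
    refine ⟨l, h1, h2, List.IsChain.imp ?_ h3⟩
    intro a b hab
    replace hab : (s * w a) * (s * w b) < 0 := hab
    by_contra hge
    push_neg at hge
    nlinarith [mul_nonneg hge (show (0:ℝ) ≤ s * s by nlinarith)]
  · rintro ⟨l, h1, h2, h3⟩
    refine ⟨l, h1, h2, List.IsChain.imp ?_ h3⟩
    intro a b hab
    have he : (s * w a) * (s * w b) = (s * s) * (w a * w b) := by ring
    rw [he, hss, one_mul]
    exact hab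

/-- **Master lemma**: the two-sided Laplace transform does not increase sign alternations. -/
lemma laplace_not_alt : ∀ (k : ℕ) (w : ℝ → ℝ), Measurable w →
    (∀ x : ℝ, Integrable (fun y => Real.exp (x * y) * w y)) →
    ¬ Alt w (k + 1) → ¬ Alt (fun x => ∫ y, Real.exp (x * y) * w y) (k + 1) := by
  intro k
  induction k with
  | zero =>
    intro w hw hI hna
    exact not_alt_laplace_of_signdef (signdef_of_not_alt_one hna)
  | succ k ih =>
    intro w hw hI hna
    by_cases h1 : Alt w 1
    case neg =>
      intro hL
      exact not_alt_laplace_of_signdef (signdef_of_not_alt_one h1) hL.one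
    case pos =>
      obtain ⟨a0, b0, hab0, hprod0⟩ := alt_one_iff.1 h1
      have hboth : (∃ y, 0 < w y) ∧ (∃ y, w y < 0) := by
        rcases mul_neg_iff.1 hprod0 with ⟨h2, h3⟩ | ⟨h2, h3⟩
        · exact ⟨⟨a0, h2⟩, ⟨b0, h3⟩⟩
        · exact ⟨⟨b0, h3⟩, ⟨a0, h2⟩⟩
      obtain ⟨⟨yp, hyp⟩, ⟨yn, hyn⟩⟩ := hboth
      set B : Set ℝ := {x | (∃ y, y < x ∧ 0 < w y) ∧ (∃ y, y < x ∧ w y < 0)} with hB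
      have hBne : B.Nonempty := by
        refine ⟨max yp yn + 1, ⟨yp, ?_, hyp⟩, ⟨yn, ?_, hyn⟩⟩
        · nlinarith [le_max_left yp yn]
        · nlinarith [le_max_right yp yn]
      have hx0 : ∃ x₀ : ℝ, ¬ ((∃ y, y < x₀ ∧ 0 < w y) ∧ (∃ y, y < x₀ ∧ w y < 0)) := by
        by_contra hcon
        simp only [not_exists, not_not] at hcon
        exact hna (alt_of_unbounded hcon (k + 2))
      obtain ⟨x₀, hx₀⟩ := hx0
      have hBbdd : BddBelow B := by
        refine ⟨x₀, fun x hx => ?_⟩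
        by_contra hlt
        push_neg at hlt
        obtain ⟨⟨y1, hy1, hy1'⟩, ⟨y2, hy2, hy2'⟩⟩ := hx
        exact hx₀ ⟨⟨y1, lt_trans hy1 hlt, hy1'⟩, ⟨y2, lt_trans hy2 hlt, hy2'⟩⟩
      set t := sInf B with ht
      have hb' : ∀ x, t < x → (∃ y, y < x ∧ 0 < w y) ∧ (∃ y, y < x ∧ w y < 0) := by
        intro x hx
        obtain ⟨b, hbB, hbx⟩ := exists_lt_of_csInf_lt hBne hx
        obtain ⟨⟨y1, hy1, hy1'⟩, ⟨y2, hy2, hy2'⟩⟩ := hbB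
        exact ⟨⟨y1, lt_trans hy1 hbx, hy1'⟩, ⟨y2, lt_trans hy2 hbx, hy2'⟩⟩
      have hcB : ¬ ((∃ y, y < t ∧ 0 < w y) ∧ (∃ y, y < t ∧ w y < 0)) := by
        rintro ⟨⟨y1, hy1, hy1'⟩, ⟨y2, hy2, hy2'⟩⟩
        have hmlt : max y1 y2 < t := max_lt hy1 hy2
        have hmid : (max y1 y2 + t) / 2 ∈ B := by
          refine ⟨⟨y1, ?_, hy1'⟩, ⟨y2, ?_, hy2'⟩⟩
          · nlinarith [le_max_left y1 y2]
          · nlinarith [le_max_right y1 y2]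
        have h3 := csInf_le hBbdd hmid
        rw [← ht] at h3
        nlinarith
      have hsgn : ∃ s : ℝ, (s = 1 ∨ s = -1) ∧ ∀ y, y < t → 0 ≤ s * w y := by
        rcases not_and_or.1 hcB with h2 | h2
        · push_neg at h2
          exact ⟨-1, Or.inr rfl, fun y hy => by nlinarith [h2 y hy]⟩
        · push_neg at h2
          exact ⟨1, Or.inl rfl, fun y hy => by nlinarith [h2 y hy]⟩
      obtain ⟨s, hs1, hsc⟩ := hsgn
      have hss : s * s = 1 := by rcases hs1 with rfl | rfl <;> norm_num
      set w' : ℝ → ℝ := fun y => s * w y with hw'def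
      have hw'meas : Measurable w' := hw.const_mul s
      have hI' : ∀ x : ℝ, Integrable (fun y => Real.exp (x * y) * w' y) := by
        intro x
        have h2 : (fun y => Real.exp (x * y) * w' y)
            = fun y => s * (Real.exp (x * y) * w y) := by
          funext y; simp only [hw'def]; ring
        rw [h2]; exact (hI x).const_mul s
      have hb'' : ∀ x, t < x → (∃ y, y < x ∧ 0 < w' y) ∧ (∃ y, y < x ∧ w' y < 0) := by
        intro x hx
        obtain ⟨⟨y1, hy1, hy1'⟩, ⟨y2, hy2, hy2'⟩⟩ := hb' x hx
        rcases hs1 with rfl | rfl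
        · exact ⟨⟨y1, hy1, by simpa [hw'def] using hy1'⟩, ⟨y2, hy2, by simpa [hw'def] using hy2'⟩⟩
        · refine ⟨⟨y2, hy2, ?_⟩, ⟨y1, hy1, ?_⟩⟩ <;> simp only [hw'def] <;> nlinarith
      have hna' : ¬ Alt w' (k + 2) := fun hcon => hna ((alt_smul_iff hss).1 hcon)
      have hnW' : ¬ Alt (fun y => (y - t) * w' y) (k + 1) := claim_step hsc hb'' hna'
      have hIW' : ∀ x : ℝ, Integrable (fun y => Real.exp (x * y) * ((y - t) * w' y)) :=
        integrable_mul_sub hw'meas hI' t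
      have hW'meas : Measurable (fun y => (y - t) * w' y) :=
        (measurable_id.sub measurable_const).mul hw'meas
      have hLW' : ¬ Alt (fun x => ∫ y, Real.exp (x * y) * ((y - t) * w' y)) (k + 1) :=
        ih _ hW'meas hIW' hnW'
      intro hAltL
      have hLw'eq : (fun x => ∫ y, Real.exp (x * y) * w' y)
          = fun x => s * ∫ y, Real.exp (x * y) * w y := by
        funext x
        have h2 : (fun y => Real.exp (x * y) * w' y)
            = fun y => s • (Real.exp (x * y) * w y) := by
          funext y; simp only [hw'def, smul_eq_mul]; ring
        rw [h2, integral_smul, smul_eq_mul]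
      have hAltL' : Alt (fun x => ∫ y, Real.exp (x * y) * w' y) (k + 2) := by
        rw [hLw'eq]
        exact (alt_smul_iff hss).2 hAltL
      set M : ℝ → ℝ := fun x => ∫ y, Real.exp (x * (y - t)) * w' y with hM
      set D : ℝ → ℝ := fun x => ∫ y, (y - t) * Real.exp (x * (y - t)) * w' y with hD
      have hderiv : ∀ x, HasDerivAt M (D x) x := fun x => hasDerivAt_laplace hw'meas hI' t x
      have hMeq : ∀ x, (∫ y, Real.exp (x * y) * w' y) = Real.exp (x * t) * M x := by
        intro x
        have h2 : M x = Real.exp (-(x * t)) * ∫ y, Real.exp (x * y) * w' y := by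
          simp only [hM]
          have h3 : (fun y => Real.exp (x * (y - t)) * w' y)
              = fun y => Real.exp (-(x * t)) • (Real.exp (x * y) * w' y) := by
            funext y
            rw [smul_eq_mul, show x * (y - t) = -(x * t) + x * y by ring, Real.exp_add]
            ring
          rw [h3, integral_smul, smul_eq_mul]
        rw [h2, ← mul_assoc, ← Real.exp_add]
        simp
      have hAltM : Alt M (k + 2) :=
        Alt.comp (φ := id) strictMono_id (c := fun x => Real.exp (x * t))
          (fun x => Real.exp_pos _) (fun x => hMeq x) hAltL'
      have hAltD : Alt D (k + 1) := Alt.deriv hderiv hAltM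
      have hDeq : ∀ x, D x
          = Real.exp (-(x * t)) * ∫ y, Real.exp (x * y) * ((y - t) * w' y) := by
        intro x
        simp only [hD]
        have h3 : (fun y => (y - t) * Real.exp (x * (y - t)) * w' y)
            = fun y => Real.exp (-(x * t)) • (Real.exp (x * y) * ((y - t) * w' y)) := by
          funext y
          rw [smul_eq_mul, show x * (y - t) = x * y + -(x * t) by ring, Real.exp_add]
          ring
        rw [h3, integral_smul, smul_eq_mul]
      have hAltLW : Alt (fun x => ∫ y, Real.exp (x * y) * ((y - t) * w' y)) (k + 1) :=
        Alt.comp (φ := id) strictMono_id (fun x => Real.exp_pos _) hDeq hAltD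
      exact hLW' hAltLW
/-- **Variation-diminishing property of the Gaussian kernel.** For bounded measurable `f`,
Gaussian-kernel convolution does not increase the number of sign variations. -/
theorem gaussian_variation_diminishing
    (σ : ℝ) (hσ : 0 < σ) (f : ℝ → ℝ)
    (hbd : ∃ C, ∀ x, |f x| ≤ C) (hmeas : Measurable f) :
    signVar (fun x => ∫ u, gaussianKernel σ u * f (x - u)) ≤ signVar f := by

  obtain ⟨C, hC⟩ := hbd
  have hC0 : 0 ≤ C := le_trans (abs_nonneg _) (hC 0)
  have hσ2 : (0:ℝ) < σ^2 := by positivity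
  set g : ℝ → ℝ := fun x => ∫ u, gaussianKernel σ u * f (x - u) with hg
  set w : ℝ → ℝ := fun y => Real.exp (-(y^2) / (2*σ^2)) * f y with hwdef
  have hwmeas : Measurable w :=
    (Continuous.measurable (by continuity)).mul hmeas
  have hIw : ∀ x : ℝ, Integrable (fun y => Real.exp (x * y) * w y) := by
    intro x
    refine Integrable.mono'
      (g := fun y => (C * Real.exp (σ^2 * x^2 / 2)) *
        Real.exp (-(1/(2*σ^2)) * (y - σ^2*x)^2)) ?_ ?_ ?_
    · exact ((integrable_exp_neg_mul_sq
        (by positivity : (0:ℝ) < 1/(2*σ^2))).comp_sub_right (σ^2*x)).const_mul _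
    · exact Measurable.aestronglyMeasurable (((measurable_id.const_mul x).exp).mul hwmeas)
    · refine Filter.Eventually.of_forall (fun y => ?_)
      have hnorm : ‖Real.exp (x*y) * w y‖
          = Real.exp (x*y) * Real.exp (-(y^2)/(2*σ^2)) * |f y| := by
        rw [Real.norm_eq_abs, hwdef]
        simp only [abs_mul, abs_of_pos (Real.exp_pos _)]
        ring
      rw [hnorm]
      calc Real.exp (x*y) * Real.exp (-(y^2)/(2*σ^2)) * |f y|
          ≤ Real.exp (x*y) * Real.exp (-(y^2)/(2*σ^2)) * C :=
            mul_le_mul_of_nonneg_left (hC y) (by positivity)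
        _ = (C * Real.exp (σ^2 * x^2 / 2)) * Real.exp (-(1/(2*σ^2)) * (y - σ^2*x)^2) := by
            rw [← Real.exp_add,
              show x*y + -(y^2)/(2*σ^2) = σ^2*x^2/2 + -(1/(2*σ^2)) * (y - σ^2*x)^2 by
                field_simp; ring,
              Real.exp_add]
            ring
  have hgeq : ∀ x, g x = ((σ * Real.sqrt (2 * Real.pi))⁻¹ * Real.exp (-(x^2)/(2*σ^2))) *
      ∫ y, Real.exp ((x/σ^2) * y) * w y := by
    intro x
    have h1 : g x = ∫ y, gaussianKernel σ (x - y) * f y := by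
      simp only [hg]
      have h2 : (fun u => gaussianKernel σ u * f (x - u))
          = fun u => (fun t => gaussianKernel σ (x - t) * f t) (x - u) := by
        funext u; simp
      rw [h2, integral_sub_left_eq_self (fun t => gaussianKernel σ (x - t) * f t) volume x]
    rw [h1]
    have h3 : (fun y => gaussianKernel σ (x - y) * f y) = fun y =>
        ((σ * Real.sqrt (2 * Real.pi))⁻¹ * Real.exp (-(x^2)/(2*σ^2))) •
          (Real.exp ((x/σ^2) * y) * w y) := by
      funext y
      rw [smul_eq_mul, hwdef]
      unfold gaussianKernel
      rw [show -((x-y)^2) / (2*σ^2)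
          = -(x^2)/(2*σ^2) + ((x/σ^2)*y + -(y^2)/(2*σ^2)) by field_simp; ring]
      rw [Real.exp_add, Real.exp_add]
      ring
    rw [h3, integral_smul, smul_eq_mul]
  have hgpos : ∀ x, 0 < (σ * Real.sqrt (2 * Real.pi))⁻¹ * Real.exp (-(x^2)/(2*σ^2)) := by
    intro x
    have h4 : 0 < Real.sqrt (2*Real.pi) := Real.sqrt_pos.2 (by positivity)
    positivity
  have hmono : StrictMono (fun x : ℝ => x / σ^2) := fun a b hab =>
    (div_lt_div_iff_of_pos_right hσ2).2 hab
  have key : ∀ m : ℕ, 1 ≤ m → Alt g m → Alt f m := by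
    intro m hm hAg
    by_contra hAf
    obtain ⟨k, rfl⟩ : ∃ k, m = k + 1 := ⟨m - 1, by omega⟩
    have hnw : ¬ Alt w (k + 1) := by
      intro hcon
      apply hAf
      exact Alt.comp (φ := id) strictMono_id
        (c := fun y => Real.exp (-(y^2)/(2*σ^2))) (fun y => Real.exp_pos _)
        (fun y => rfl) hcon
    exact laplace_not_alt k w hwmeas hIw hnw (Alt.comp hmono hgpos (fun x => hgeq x) hAg)
  rw [show signVar g = ⨆ l : {l : List ℝ // l.Pairwise (· < ·)},
      (signChanges (((l : List ℝ).map g).filter fun a => decide (a ≠ 0)) : ℕ∞) from rfl]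
  refine iSup_le ?_
  rintro ⟨l, hl⟩
  show (signChanges ((l.map g).filter fun a => decide (a ≠ 0)) : ℕ∞) ≤ signVar f
  by_cases hm : signChanges ((l.map g).filter fun a => decide (a ≠ 0)) = 0
  · rw [hm]; simp
  · have hm1 : 1 ≤ signChanges ((l.map g).filter fun a => decide (a ≠ 0)) := by omega
    exact le_signVar_of_alt hm1 (key _ hm1 (alt_of_signChanges hl rfl hm1))
end

section
/- Let f : ℝ → ℝ be continuous, let t ∈ ℝ, and suppose there is R > 0 such that f(x) < t for all x with |x| ≥ R. Assume every connected component of the superlevel set S = {x : f(x) ≥ t} contains a point where f > t, and that v(f − t) =: v is finite. Then the number of connected components of S is finite and is at most ⌊(v + 1)/2⌋. -/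
lemma signChanges_cons_cons (a b : ℝ) (l : List ℝ) :
    signChanges (a :: b :: l) = (if a * b < 0 then 1 else 0) + signChanges (b :: l) := by
  rw [signChanges]

lemma mk_eq_of_mem_ccIn {S : Set ℝ} {x y : ℝ} (hx : x ∈ S)
    (hy : y ∈ connectedComponentIn S x) :
    ConnectedComponents.mk (⟨y, connectedComponentIn_subset S x hy⟩ : S) =
      ConnectedComponents.mk ⟨x, hx⟩ := by
  rw [connectedComponentIn_eq_image hx] at hy
  obtain ⟨y', hy', hyy⟩ := hy
  have : (⟨y, connectedComponentIn_subset S x (by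
      rw [connectedComponentIn_eq_image hx]; exact ⟨y', hy', hyy⟩)⟩ : S) = y' :=
    Subtype.ext hyy.symm
  rw [this]
  exact ConnectedComponents.coe_eq_coe.mpr (connectedComponent_eq hy').symm

lemma between_lemma (f : ℝ → ℝ) (t : ℝ) {a b : ℝ} (hab : a < b)
    (ha : a ∈ {x : ℝ | t ≤ f x}) (hb : b ∈ {x : ℝ | t ≤ f x})
    (hne : connectedComponentIn {x : ℝ | t ≤ f x} a ≠
      connectedComponentIn {x : ℝ | t ≤ f x} b) :
    ∃ z, a < z ∧ z < b ∧ f z < t := by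
  by_contra h
  push_neg at h
  have hsub : Set.Icc a b ⊆ {x : ℝ | t ≤ f x} := by
    intro x hx
    rcases eq_or_lt_of_le hx.1 with rfl | h1
    · exact ha
    rcases eq_or_lt_of_le hx.2 with rfl | h2
    · exact hb
    · exact h x h1 h2
  have h1 : Set.Icc a b ⊆ connectedComponentIn {x : ℝ | t ≤ f x} a :=
    isPreconnected_Icc.subset_connectedComponentIn (Set.left_mem_Icc.mpr hab.le) hsub
  exact hne (connectedComponentIn_eq (h1 (Set.right_mem_Icc.mpr hab.le)))

lemma alt_list (f : ℝ → ℝ) (t R : ℝ) (hR : 0 < R)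
    (hout : ∀ x : ℝ, R ≤ |x| → f x < t)
    (ys : List ℝ) :
    ys.Pairwise (· < ·) → (∀ y ∈ ys, t < f y) →
      (∀ a ∈ ys, ∀ b ∈ ys, a ≠ b →
        connectedComponentIn {x : ℝ | t ≤ f x} a ≠ connectedComponentIn {x : ℝ | t ≤ f x} b) →
      ∀ z : ℝ, (∀ y ∈ ys, z < y) → f z < t →
      ∃ l : List ℝ, (z :: l).Pairwise (· < ·) ∧
        (∀ x ∈ (z :: l), f x - t ≠ 0) ∧
        signChanges ((z :: l).map (fun x => f x - t)) = 2 * ys.length := by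
  induction ys with
  | nil =>
    intro _ _ _ z _ hz
    refine ⟨[], by simp, ?_, by simp [signChanges]⟩
    intro x hx
    rw [List.mem_singleton] at hx
    subst hx
    intro h
    have := sub_eq_zero.mp h
    linarith
  | cons y ys' ih =>
    intro hsort hgt hcomps z hz hfz
    rw [List.pairwise_cons] at hsort
    have hy : t < f y := hgt y (by simp)
    obtain ⟨z', hyz', hz'lt, hfz'⟩ :
        ∃ z', y < z' ∧ (∀ w ∈ ys', z' < w) ∧ f z' < t := by
      match ys' with
      | [] =>
        refine ⟨max (y + 1) R, lt_of_lt_of_le (by linarith) (le_max_left _ _), by simp, ?_⟩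
        exact hout _ (le_trans (le_max_right _ _) (le_abs_self _))
      | y' :: rest =>
        have hyy' : y < y' := hsort.1 y' (by simp)
        have hne := hcomps y (by simp) y' (by simp) (ne_of_lt hyy')
        obtain ⟨w, hw1, hw2, hw3⟩ := between_lemma f t hyy' (le_of_lt hy) (le_of_lt (hgt y' (by simp))) hne
        refine ⟨w, hw1, ?_, hw3⟩
        intro u hu
        rcases List.mem_cons.mp hu with rfl | hu
        · exact hw2
        · have := (List.pairwise_cons.mp hsort.2).1 u hu
          linarith
    obtain ⟨l', hl'sort, hl'ne, hl'sc⟩ :=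
      ih hsort.2 (fun u hu => hgt u (by simp [hu]))
        (fun a ha b hb hab => hcomps a (by simp [ha]) b (by simp [hb]) hab)
        z' hz'lt hfz'
    have hz'l' := List.pairwise_cons.mp hl'sort
    have hzy : z < y := hz y (by simp)
    refine ⟨y :: z' :: l', ?_, ?_, ?_⟩
    · rw [List.pairwise_cons]
      constructor
      · intro b hb
        rcases List.mem_cons.mp hb with rfl | hb
        · exact hzy
        rcases List.mem_cons.mp hb with rfl | hb
        · linarith
        · have := hz'l'.1 b hb; linarith
      rw [List.pairwise_cons]
      refine ⟨?_, hl'sort⟩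
      intro b hb
      rcases List.mem_cons.mp hb with rfl | hb
      · exact hyz'
      · have := hz'l'.1 b hb; linarith
    · intro x hx
      rcases List.mem_cons.mp hx with rfl | hx
      · intro h; have := sub_eq_zero.mp h; linarith
      rcases List.mem_cons.mp hx with rfl | hx
      · intro h; have := sub_eq_zero.mp h; linarith
      · exact hl'ne x hx
    · simp only [List.map_cons]
      rw [signChanges_cons_cons, signChanges_cons_cons]
      have h1 : (f z - t) * (f y - t) < 0 :=
        mul_neg_of_neg_of_pos (by linarith) (by linarith)
      have h2 : (f y - t) * (f z' - t) < 0 :=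
        mul_neg_of_pos_of_neg (by linarith) (by linarith)
      rw [if_pos h1, if_pos h2]
      simp only [List.map_cons] at hl'sc
      rw [hl'sc]
      simp [List.length_cons]
      ring

/-- **Component count of a superlevel set is bounded by sign variations.** If `f` is
continuous, `f < t` outside `[-R, R]`, every connected component of `S = {f ≥ t}` contains a
point where `f > t`, and `v(f - t) = v < ∞`, then `S` has finitely many connected components,
at most `⌊(v+1)/2⌋`. -/
theorem component_count_le_sign_variations
    (f : ℝ → ℝ) (hf : Continuous f) (t : ℝ) (R : ℝ) (hR : 0 < R)
    (hout : ∀ x : ℝ, R ≤ |x| → f x < t)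
    (hcomp : ∀ x ∈ {x : ℝ | t ≤ f x},
      ∃ y ∈ connectedComponentIn {x : ℝ | t ≤ f x} x, t < f y)
    (v : ℕ) (hv : signVar (fun x => f x - t) = (v : ℕ∞)) :
    Finite (ConnectedComponents {x : ℝ | t ≤ f x}) ∧
      Nat.card (ConnectedComponents {x : ℝ | t ≤ f x}) ≤ (v + 1) / 2 := by
  classical
  set S : Set ℝ := {x : ℝ | t ≤ f x} with hS
  -- choice of a representative point with f > t in each component
  have hrep : ∀ c : ConnectedComponents (↥S), ∃ y : ℝ, t < f y ∧
      ∃ hy : y ∈ S, ConnectedComponents.mk ⟨y, hy⟩ = c := by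
    intro c
    obtain ⟨x, rfl⟩ := ConnectedComponents.surjective_coe c
    obtain ⟨y, hyc, hty⟩ := hcomp x.1 x.2
    exact ⟨y, hty, connectedComponentIn_subset _ _ hyc, mk_eq_of_mem_ccIn x.2 hyc⟩
  choose F hF1 hFS hFmk using hrep
  have Finj : Function.Injective F := by
    intro c c' h
    rw [← hFmk c, ← hFmk c']
    exact congrArg _ (Subtype.ext h)
  have Fcomp : ∀ c c', c ≠ c' → connectedComponentIn S (F c) ≠ connectedComponentIn S (F c') := by
    intro c c' hcc h
    apply hcc
    have hmem : F c' ∈ connectedComponentIn S (F c) := by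
      rw [h]; exact mem_connectedComponentIn (hFS c')
    have h2 := mk_eq_of_mem_ccIn (hFS c) hmem
    rw [← hFmk c, ← hFmk c']
    exact h2.symm
  -- key bound for any finset of components
  have key : ∀ T : Finset (ConnectedComponents (↥S)), 2 * T.card ≤ v := by
    intro T
    set Y : Finset ℝ := T.image F with hY
    have hcard : Y.card = T.card := Finset.card_image_of_injective T Finj
    set ys : List ℝ := Y.sort (· ≤ ·) with hys
    have hsorted : ys.Pairwise (· < ·) := (Finset.sortedLT_sort Y).pairwise
    have hmem : ∀ y ∈ ys, ∃ c, F c = y := by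
      intro y hy
      have : y ∈ Y := (Finset.mem_sort _).mp hy
      obtain ⟨c, _, hc⟩ := Finset.mem_image.mp this
      exact ⟨c, hc⟩
    have hgt : ∀ y ∈ ys, t < f y := by
      intro y hy
      obtain ⟨c, rfl⟩ := hmem y hy
      exact hF1 c
    have hcomps : ∀ a ∈ ys, ∀ b ∈ ys, a ≠ b →
        connectedComponentIn S a ≠ connectedComponentIn S b := by
      intro a ha b hb hab
      obtain ⟨c, rfl⟩ := hmem a ha
      obtain ⟨c', rfl⟩ := hmem b hb
      exact Fcomp c c' (fun h => hab (by rw [h]))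
    have hzlt : ∀ y ∈ ys, -R < y := by
      intro y hy
      by_contra h
      push_neg at h
      have hRy : R ≤ |y| := le_trans (by linarith : R ≤ -y) (neg_le_abs y)
      exact absurd (hgt y hy) (not_lt.mpr (le_of_lt (hout y hRy)))
    have hfz : f (-R) < t := hout (-R) (by rw [abs_neg, abs_of_pos hR])
    obtain ⟨l, hlsort, hlne, hlsc⟩ :=
      alt_list f t R hR hout ys hsorted hgt hcomps (-R) hzlt hfz
    -- relate to signVar
    have hfilter : (((-R :: l)).map (fun x => f x - t)).filter
        (fun a => decide (a ≠ 0)) = ((-R :: l)).map (fun x => f x - t) := by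
      apply List.filter_eq_self.mpr
      intro a ha
      obtain ⟨x, hx, rfl⟩ := List.mem_map.mp ha
      exact decide_eq_true (hlne x hx)
    have hle : ((signChanges ((((-R :: l) : List ℝ).map (fun x => f x - t)).filter
        fun a => decide (a ≠ 0)) : ℕ) : ℕ∞) ≤ signVar (fun x => f x - t) := by
      exact le_iSup (fun (l : {l : List ℝ // l.Pairwise (· < ·)}) =>
        ((signChanges (((l : List ℝ).map (fun x => f x - t)).filter
          fun a => decide (a ≠ 0)) : ℕ) : ℕ∞)) ⟨-R :: l, hlsort⟩
    rw [hfilter, hlsc, hv] at hle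
    have hlen : ys.length = T.card := by
      rw [hys, Finset.length_sort, hcard]
    rw [hlen] at hle
    exact_mod_cast hle
  have hfin : Finite (ConnectedComponents (↥S)) := by
    by_contra hinf
    rw [not_finite_iff_infinite] at hinf
    obtain ⟨T, hT⟩ := Infinite.exists_subset_card_eq (ConnectedComponents (↥S)) (v + 1)
    have := key T
    rw [hT] at this
    omega
  refine ⟨hfin, ?_⟩
  haveI := Fintype.ofFinite (ConnectedComponents (↥S))
  have := key Finset.univ
  rw [Finset.card_univ] at this
  rw [Nat.card_eq_fintype_card]
  omega
end

section
/- Let σ > 0, let f : ℝ → ℝ be nonnegative, bounded and measurable, let t > 0, and let b₁ < a₂ with gap width δ := a₂ − b₁. Suppose f(x) ≥ t for Lebesgue-almost every x outside the open interval (b₁, a₂). Then for every x ∈ [b₁, a₂], (φ_σ * f)(x) ≥ t · ∫_{|u| ≥ δ/2} φ_σ(u) du. In particular, if ε > 0 satisfies ∫_{|u| ≤ δ/2} φ_σ(u) du ≤ ε/t, then (φ_σ * f)(x) ≥ t − ε for all x ∈ [b₁, a₂], so the smoothed function fills the valley above level t − ε. -/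
open MeasureTheory
open Set

variable {σ : ℝ}

lemma gk_nonneg (hσ : 0 < σ) (u : ℝ) : 0 ≤ gaussianKernel σ u := by
  unfold gaussianKernel
  positivity

lemma gk_integrable (hσ : 0 < σ) : Integrable (gaussianKernel σ) := by
  unfold gaussianKernel
  have h : ∀ u : ℝ, Real.exp (-(u ^ 2) / (2 * σ ^ 2)) = Real.exp (-(1 / (2 * σ ^ 2)) * u ^ 2) := by
    intro u; ring_nf
  simp_rw [h]
  exact (integrable_exp_neg_mul_sq (by positivity)).const_mul _

lemma gk_total (hσ : 0 < σ) : ∫ u, gaussianKernel σ u = 1 := by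
  unfold gaussianKernel
  rw [integral_const_mul]
  rw [show (fun u : ℝ => Real.exp (-(u ^ 2) / (2 * σ ^ 2)))
      = fun u : ℝ => Real.exp (-(1 / (2 * σ ^ 2)) * u ^ 2) by funext u; ring_nf]
  rw [integral_gaussian (1 / (2 * σ ^ 2))]
  rw [show Real.pi / (1 / (2 * σ ^ 2)) = (2 * Real.pi) * σ ^ 2 by field_simp,
    Real.sqrt_mul (by positivity : (0:ℝ) ≤ 2 * Real.pi) (σ ^ 2), Real.sqrt_sq hσ.le]
  have hpi : (0:ℝ) < Real.sqrt (2 * Real.pi) := Real.sqrt_pos.2 (by positivity)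
  field_simp

lemma gk_anti (hσ : 0 < σ) {u s : ℝ} (hu : 0 ≤ u) (hs : 0 ≤ s) :
    gaussianKernel σ (u + s) ≤ gaussianKernel σ u := by
  unfold gaussianKernel
  have h1 : (0:ℝ) < (σ * Real.sqrt (2 * Real.pi))⁻¹ := by positivity
  apply mul_le_mul_of_nonneg_left _ h1.le
  apply Real.exp_le_exp.2
  have h2 : -((u + s) ^ 2) ≤ -(u ^ 2) := by nlinarith
  have h3 : (0:ℝ) ≤ 2 * σ ^ 2 := by positivity
  exact div_le_div_of_nonneg_right h2 h3 |>.trans_eq rfl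

lemma gk_intOn (hσ : 0 < σ) (s : Set ℝ) : IntegrableOn (gaussianKernel σ) s :=
  (gk_integrable hσ).integrableOn

lemma gk_tail_helper (hσ : 0 < σ) {c m : ℝ} (hc : 0 ≤ c) (hcm : c ≤ m) :
    (∫ u in Ici m, gaussianKernel σ u) + ∫ u in Ici m, gaussianKernel σ u
      ≤ (∫ u in Ici c, gaussianKernel σ u) + ∫ u in Ici (2 * m - c), gaussianKernel σ u := by
  have hm2 : m ≤ 2 * m - c := by linarith
  have h1 : (∫ u in Ici c, gaussianKernel σ u)
      = (∫ u in Ico c m, gaussianKernel σ u) + ∫ u in Ici m, gaussianKernel σ u := by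
    rw [← setIntegral_union ((Set.Iio_disjoint_Ici le_rfl).mono_left Set.Ico_subset_Iio_self) measurableSet_Ici
      (gk_intOn hσ _) (gk_intOn hσ _), Set.Ico_union_Ici_eq_Ici hcm]
  have h2 : (∫ u in Ici m, gaussianKernel σ u)
      = (∫ u in Ico m (2 * m - c), gaussianKernel σ u)
        + ∫ u in Ici (2 * m - c), gaussianKernel σ u := by
    rw [← setIntegral_union ((Set.Iio_disjoint_Ici le_rfl).mono_left Set.Ico_subset_Iio_self) measurableSet_Ici
      (gk_intOn hσ _) (gk_intOn hσ _), Set.Ico_union_Ici_eq_Ici hm2]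
  have key : (∫ u in Ico m (2 * m - c), gaussianKernel σ u)
      ≤ ∫ u in Ico c m, gaussianKernel σ u := by
    have e1 : (∫ u in Ico m (2 * m - c), gaussianKernel σ u)
        = ∫ u in m..(2 * m - c), gaussianKernel σ u := by
      rw [MeasureTheory.integral_Ico_eq_integral_Ioo, intervalIntegral.integral_of_le hm2,
        MeasureTheory.integral_Ioc_eq_integral_Ioo]
    have e2 : (∫ u in Ico c m, gaussianKernel σ u)
        = ∫ u in c..m, gaussianKernel σ u := by
      rw [MeasureTheory.integral_Ico_eq_integral_Ioo, intervalIntegral.integral_of_le hcm,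
        MeasureTheory.integral_Ioc_eq_integral_Ioo]
    have e3 : (∫ u in c..m, gaussianKernel σ (u + (m - c)))
        = ∫ u in m..(2 * m - c), gaussianKernel σ u := by
      rw [intervalIntegral.integral_comp_add_right]
      norm_num
      ring_nf
    rw [e1, e2, ← e3]
    apply intervalIntegral.integral_mono_on hcm
    · exact ((gk_integrable hσ).comp_add_right (m - c)).intervalIntegrable
    · exact (gk_integrable hσ).intervalIntegrable
    · intro u hu
      exact gk_anti hσ (hc.trans hu.1) (by linarith)
  linarith [h1, h2]

lemma gk_even (u : ℝ) : gaussianKernel σ (-u) = gaussianKernel σ u := by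
  simp [gaussianKernel]

lemma gk_Iic (hσ : 0 < σ) (a : ℝ) :
    (∫ u in Iic a, gaussianKernel σ u) = ∫ u in Ici (-a), gaussianKernel σ u := by
  rw [integral_Ici_eq_integral_Ioi, ← integral_comp_neg_Iic]
  simp_rw [gk_even]

lemma gk_tail_main (hσ : 0 < σ) {δ c : ℝ} (hδ : 0 < δ) (hc0 : 0 ≤ c) (hcδ : c ≤ δ) :
    (∫ u in {u : ℝ | δ / 2 ≤ |u|}, gaussianKernel σ u)
      ≤ (∫ u in Iic (c - δ), gaussianKernel σ u) + ∫ u in Ici c, gaussianKernel σ u := by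
  have hset : {u : ℝ | δ / 2 ≤ |u|} = Iic (-(δ / 2)) ∪ Ici (δ / 2) := by
    ext u
    simp only [mem_setOf_eq, mem_union, mem_Iic, mem_Ici, le_abs, le_neg]
    tauto
  rw [hset, setIntegral_union (Set.Iic_disjoint_Ici.2 (by intro h; linarith))
    measurableSet_Ici (gk_intOn hσ _) (gk_intOn hσ _), gk_Iic hσ, neg_neg,
    gk_Iic hσ, neg_sub]
  rcases le_total c (δ / 2) with h | h
  · have := gk_tail_helper hσ hc0 h
    rw [show 2 * (δ / 2) - c = δ - c by ring] at this
    linarith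
  · have := gk_tail_helper hσ (by linarith : (0:ℝ) ≤ δ - c) (by linarith : δ - c ≤ δ / 2)
    rw [show 2 * (δ / 2) - (δ - c) = c by ring] at this
    linarith


/-- **Valley-filling inequality.** If the nonnegative bounded measurable `f` satisfies
`f ≥ t` a.e. outside the gap `(b₁, a₂)` of width `δ = a₂ - b₁`, then throughout `[b₁, a₂]`
the Gaussian-smoothed function is at least `t · ∫_{|u| ≥ δ/2} φ_σ(u) du`; in particular, if
`∫_{|u| ≤ δ/2} φ_σ(u) du ≤ ε/t` then the smoothed function is at least `t - ε` on the gap. -/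
theorem valley_filling
    (σ : ℝ) (hσ : 0 < σ) (f : ℝ → ℝ)
    (hnn : ∀ x, 0 ≤ f x) (hbd : ∃ C, ∀ x, |f x| ≤ C) (hmeas : Measurable f)
    (t : ℝ) (ht : 0 < t) (b₁ a₂ : ℝ) (hlt : b₁ < a₂) (δ : ℝ) (hδ : δ = a₂ - b₁)
    (hf : ∀ᵐ x ∂volume, x ∉ Set.Ioo b₁ a₂ → t ≤ f x) :
    (∀ x ∈ Set.Icc b₁ a₂,
        t * ∫ u in {u : ℝ | δ / 2 ≤ |u|}, gaussianKernel σ u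
          ≤ ∫ u, gaussianKernel σ u * f (x - u)) ∧
      ∀ ε > (0 : ℝ), (∫ u in {u : ℝ | |u| ≤ δ / 2}, gaussianKernel σ u) ≤ ε / t →
        ∀ x ∈ Set.Icc b₁ a₂, t - ε ≤ ∫ u, gaussianKernel σ u * f (x - u) := by
  have hδpos : 0 < δ := by rw [hδ]; linarith
  have hAmeas : MeasurableSet {u : ℝ | δ / 2 ≤ |u|} :=
    measurableSet_le measurable_const measurable_abs
  have main : ∀ x ∈ Set.Icc b₁ a₂,
      t * ∫ u in {u : ℝ | δ / 2 ≤ |u|}, gaussianKernel σ u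
        ≤ ∫ u, gaussianKernel σ u * f (x - u) := by
    intro x hx
    obtain ⟨C, hC⟩ := hbd
    -- integrability of the integrand
    have hfm : Measurable fun u : ℝ => f (x - u) :=
      hmeas.comp (measurable_const.sub measurable_id)
    have h0 : Integrable (fun u => gaussianKernel σ u * f (x - u)) := by
      have := (gk_integrable hσ).bdd_mul (c := C) hfm.aestronglyMeasurable
        (Filter.Eventually.of_forall fun u => by simpa using hC (x - u))
      exact this.congr (Filter.Eventually.of_forall fun u => mul_comm _ _)
    set S : Set ℝ := Iic (x - a₂) ∪ Ici (x - b₁) with hS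
    have hSmeas : MeasurableSet S := measurableSet_Iic.union measurableSet_Ici
    -- a.e. lower bound on S
    have hmp : MeasurePreserving (fun u : ℝ => x - u) volume volume :=
      Measure.measurePreserving_sub_left volume x
    have hf' : ∀ᵐ u ∂(volume : Measure ℝ), x - u ∉ Set.Ioo b₁ a₂ → t ≤ f (x - u) := by
      rw [← hmp.map_eq] at hf
      exact ae_of_ae_map hmp.measurable.aemeasurable hf
    have hae : ∀ᵐ u ∂(volume : Measure ℝ),
        u ∈ S → t * gaussianKernel σ u ≤ gaussianKernel σ u * f (x - u) := by
      filter_upwards [hf'] with u hu huS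
      have hnot : x - u ∉ Set.Ioo b₁ a₂ := by
        rcases huS with h | h
        · simp only [mem_Iic] at h
          intro hmem
          exact absurd hmem.2 (by linarith)
        · simp only [mem_Ici] at h
          intro hmem
          exact absurd hmem.1 (by linarith)
      calc t * gaussianKernel σ u = gaussianKernel σ u * t := mul_comm _ _
        _ ≤ gaussianKernel σ u * f (x - u) :=
            mul_le_mul_of_nonneg_left (hu hnot) (gk_nonneg hσ u)
    have step2 : t * ∫ u in S, gaussianKernel σ u
        ≤ ∫ u in S, gaussianKernel σ u * f (x - u) := by
      rw [← MeasureTheory.integral_const_mul]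
      exact setIntegral_mono_ae_restrict
        (((gk_integrable hσ).const_mul t).integrableOn)
        (h0.integrableOn)
        ((ae_restrict_iff' hSmeas).2 hae)
    have step1 : (∫ u in S, gaussianKernel σ u * f (x - u))
        ≤ ∫ u, gaussianKernel σ u * f (x - u) :=
      setIntegral_le_integral h0 (Filter.Eventually.of_forall fun u =>
        mul_nonneg (gk_nonneg hσ u) (hnn _))
    have step3 : (∫ u in {u : ℝ | δ / 2 ≤ |u|}, gaussianKernel σ u)
        ≤ ∫ u in S, gaussianKernel σ u := by
      have hxa : x - a₂ = (x - b₁) - δ := by rw [hδ]; ring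
      rw [hS, setIntegral_union (Set.Iic_disjoint_Ici.2 (by intro h; linarith))
        measurableSet_Ici (gk_intOn hσ _) (gk_intOn hσ _), hxa]
      exact gk_tail_main hσ hδpos (by linarith [hx.1] : (0:ℝ) ≤ x - b₁)
        (by rw [hδ]; linarith [hx.2])
    calc t * ∫ u in {u : ℝ | δ / 2 ≤ |u|}, gaussianKernel σ u
        ≤ t * ∫ u in S, gaussianKernel σ u :=
          mul_le_mul_of_nonneg_left step3 ht.le
      _ ≤ ∫ u in S, gaussianKernel σ u * f (x - u) := step2
      _ ≤ ∫ u, gaussianKernel σ u * f (x - u) := step1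
  refine ⟨main, fun ε hε hεt x hx => ?_⟩
  have htail : 1 - ε / t ≤ ∫ u in {u : ℝ | δ / 2 ≤ |u|}, gaussianKernel σ u := by
    have hcompl : (∫ u in {u : ℝ | δ / 2 ≤ |u|}, gaussianKernel σ u)
        + ∫ u in {u : ℝ | δ / 2 ≤ |u|}ᶜ, gaussianKernel σ u = 1 := by
      rw [integral_add_compl hAmeas (gk_integrable hσ), gk_total hσ]
    have hsub : (∫ u in {u : ℝ | δ / 2 ≤ |u|}ᶜ, gaussianKernel σ u)
        ≤ ∫ u in {u : ℝ | |u| ≤ δ / 2}, gaussianKernel σ u := by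
      apply setIntegral_mono_set (gk_intOn hσ _)
        (Filter.Eventually.of_forall fun u => gk_nonneg hσ u)
      apply Filter.Eventually.of_forall
      intro u hu
      have h1 : ¬ δ / 2 ≤ |u| := hu
      exact le_of_not_ge h1
    linarith
  have := main x hx
  have h2 : t - ε ≤ t * ∫ u in {u : ℝ | δ / 2 ≤ |u|}, gaussianKernel σ u := by
    have := mul_le_mul_of_nonneg_left htail ht.le
    rw [mul_sub, mul_div_cancel₀ _ ht.ne'] at this
    linarith
  linarith
end

section
/- Let ε ≥ 0, M > 0, t ∈ ℝ, N ≥ 1, and let f, g : ℝ → ℝ be continuous with sup_{y} |f(y) − g(y)| ≤ ε. Suppose {y : f(y) ≥ t} = ⋃_{j=1}^N [ℓ_j, u_j] and {y : g(y) ≥ t − ε} = ⋃_{j=1}^N [ℓ̃_j, ũ_j], each a disjoint union of N nonempty compact intervals, with f(ℓ_j) = f(u_j) = t and g(ℓ̃_j) = g(ũ_j) = t − ε for every j. Assume further that for each j, |f(y₁) − f(y₂)| ≥ M |y₁ − y₂| whenever y₁, y₂ both lie in the closed interval with endpoints ℓ_j and ℓ̃_j, and likewise whenever y₁, y₂ both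 lie in the closed interval with endpoints u_j and ũ_j. Then the total lengths satisfy | Σ_{j=1}^N (ũ_j − ℓ̃_j) − Σ_{j=1}^N (u_j − ℓ_j) | ≤ 4Nε/M. In particular, when g = φ_σ * f for an L-Lipschitz f and ε = Lσ√(2/π), the total interval length changes by at most (4NLσ/M)√(2/π). -/
/-- **Interval-length bound.** If `|f - g| ≤ ε`, the superlevel sets `{f ≥ t}` and
`{g ≥ t - ε}` are disjoint unions of `N` nonempty compact intervals whose endpoints attain
the respective levels, and `f` satisfies a reverse-Lipschitz bound with constant `M` between
each pair of corresponding endpoints, then the total lengths differ by at most `4Nε/M`. -/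
theorem interval_length_bound
    (ε M t : ℝ) (hε : 0 ≤ ε) (hM : 0 < M) (N : ℕ) (hN : 1 ≤ N)
    (f g : ℝ → ℝ) (hf : Continuous f) (hg : Continuous g)
    (hfg : ∀ y, |f y - g y| ≤ ε)
    (ℓ u ℓ' u' : Fin N → ℝ)
    (hne : ∀ j, ℓ j ≤ u j) (hne' : ∀ j, ℓ' j ≤ u' j)
    (hSf : {y : ℝ | t ≤ f y} = ⋃ j, Set.Icc (ℓ j) (u j))
    (hSg : {y : ℝ | t - ε ≤ g y} = ⋃ j, Set.Icc (ℓ' j) (u' j))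
    (hdisj : ∀ i j, i ≠ j → Disjoint (Set.Icc (ℓ i) (u i)) (Set.Icc (ℓ j) (u j)))
    (hdisj' : ∀ i j, i ≠ j → Disjoint (Set.Icc (ℓ' i) (u' i)) (Set.Icc (ℓ' j) (u' j)))
    (hfl : ∀ j, f (ℓ j) = t) (hfu : ∀ j, f (u j) = t)
    (hgl : ∀ j, g (ℓ' j) = t - ε) (hgu : ∀ j, g (u' j) = t - ε)
    (hrevl : ∀ j, ∀ y₁ ∈ Set.uIcc (ℓ j) (ℓ' j), ∀ y₂ ∈ Set.uIcc (ℓ j) (ℓ' j),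
        M * |y₁ - y₂| ≤ |f y₁ - f y₂|)
    (hrevu : ∀ j, ∀ y₁ ∈ Set.uIcc (u j) (u' j), ∀ y₂ ∈ Set.uIcc (u j) (u' j),
        M * |y₁ - y₂| ≤ |f y₁ - f y₂|) :
    |(∑ j, (u' j - ℓ' j)) - ∑ j, (u j - ℓ j)| ≤ 4 * N * ε / M := by
  have bound : ∀ (a b : ℝ), f a = t → g b = t - ε →
      (∀ y₁ ∈ Set.uIcc a b, ∀ y₂ ∈ Set.uIcc a b, M * |y₁ - y₂| ≤ |f y₁ - f y₂|) →
      |b - a| ≤ 2 * ε / M := by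
    intro a b hfa hgb hrev
    have h1 := hrev a Set.left_mem_uIcc b Set.right_mem_uIcc
    have h2 := hfg b
    rw [hgb] at h2
    have habs : |f a - f b| ≤ 2 * ε := by
      rw [hfa]
      have h3 : |f b - t| ≤ 2 * ε := by
        calc |f b - t| = |(f b - (t - ε)) - ε| := by ring_nf
          _ ≤ |f b - (t - ε)| + |ε| := abs_sub _ _
          _ ≤ ε + ε := by
              have : |ε| = ε := abs_of_nonneg hε
              linarith
          _ = 2 * ε := by ring
      calc |t - f b| = |f b - t| := abs_sub_comm _ _
        _ ≤ 2 * ε := h3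
    have : M * |b - a| ≤ 2 * ε := by
      rw [abs_sub_comm]
      exact h1.trans habs
    rw [div_eq_inv_mul, ← inv_mul_cancel_left₀ hM.ne' |b - a|]
    exact mul_le_mul_of_nonneg_left this (inv_nonneg.mpr hM.le)
  have hℓ : ∀ j, |ℓ' j - ℓ j| ≤ 2 * ε / M := fun j =>
    bound (ℓ j) (ℓ' j) (hfl j) (hgl j) (hrevl j)
  have hu : ∀ j, |u' j - u j| ≤ 2 * ε / M := fun j =>
    bound (u j) (u' j) (hfu j) (hgu j) (hrevu j)
  calc |(∑ j, (u' j - ℓ' j)) - ∑ j, (u j - ℓ j)|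
      = |∑ j, ((u' j - u j) - (ℓ' j - ℓ j))| := by
        congr 1
        rw [← Finset.sum_sub_distrib]
        exact Finset.sum_congr rfl fun j _ => by ring
    _ ≤ ∑ j, |(u' j - u j) - (ℓ' j - ℓ j)| := Finset.abs_sum_le_sum_abs _ _
    _ ≤ ∑ j : Fin N, (4 * ε / M) := by
        apply Finset.sum_le_sum
        intro j _
        calc |(u' j - u j) - (ℓ' j - ℓ j)| ≤ |u' j - u j| + |ℓ' j - ℓ j| := abs_sub _ _
          _ ≤ 2 * ε / M + 2 * ε / M := add_le_add (hu j) (hℓ j)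
          _ = 4 * ε / M := by ring
    _ = N * (4 * ε / M) := by simp [Finset.sum_const, mul_comm]
    _ = 4 * N * ε / M := by ring
end
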